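/- arXiv:2003.14085 — 8 statements merged into one kernel-verified Lean document; each statement's English description precedes it below -/
import Mathlib

section
/- For a binomial random variable Z with parameters T and 1/2, the mean absolute deviation satisfies E|Z - T/2| = (⌊T/2⌋ + 1) * C(T, ⌊T/2⌋+1) / 2^T. -/
open Finset

/-- De Moivre's formula for the mean absolute deviation of a symmetric
binomial random variable `Z ~ Binomial(T, 1/2)`:
`E|Z - T/2| = (⌊T/2⌋ + 1) * C(T, ⌊T/2⌋+1) / 2^T`. -/
theorem stmt_0 (T : ℕ) (hT : 0 < T) :
    ∑ k ∈ Finset.range (T + 1),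
        ((T.choose k : ℝ) / 2 ^ T) * |(k : ℝ) - (T : ℝ) / 2|
      = (((T / 2 : ℕ) : ℝ) + 1) * (T.choose (T / 2 + 1) : ℝ) / 2 ^ T := by
  set m := T / 2 with hm
  -- basic binomial facts (real-valued)
  have hchoose1 : ∀ k, (T : ℝ) * ((T-1).choose k : ℝ) = (T.choose (k+1) : ℝ) * (k+1) := by
    intro k
    have h := Nat.add_one_mul_choose_eq (T-1) k
    have hT1 : T - 1 + 1 = T := Nat.succ_pred_eq_of_pos hT
    rw [hT1] at h
    exact_mod_cast h
  have hchoose2 : ∀ k, (T : ℝ) * ((T-1).choose k : ℝ) = (T.choose k : ℝ) * ((T:ℝ) - k) ∨ T < k := by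
    intro k
    rcases le_or_gt k T with hk | hk
    · left
      have h1 := Nat.choose_succ_right_eq T k
      have : (T : ℝ) * ((T-1).choose k : ℝ) = (T.choose k : ℝ) * ((T - k : ℕ) : ℝ) := by
        rw [hchoose1 k]; exact_mod_cast h1
      rw [this, Nat.cast_sub hk]
    · right; exact hk
  -- sum of binomial coefficients
  have sum1 : ∑ k ∈ range (T+1), (T.choose k : ℝ) = 2 ^ T := by
    exact_mod_cast congrArg (Nat.cast : ℕ → ℝ) (Nat.sum_range_choose T)
  -- first moment
  have sum2 : ∑ k ∈ range (T+1), (T.choose k : ℝ) * k = T * 2 ^ (T-1) := by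
    rw [Finset.sum_range_succ']
    simp only [Nat.cast_zero, mul_zero, add_zero]
    have : ∀ j ∈ range T, (T.choose (j+1) : ℝ) * ((j+1 : ℕ) : ℝ)
        = (T : ℝ) * ((T-1).choose j : ℝ) := by
      intro j _
      rw [hchoose1 j]; push_cast; ring
    rw [Finset.sum_congr rfl this, ← Finset.mul_sum]
    have hT1 : T - 1 + 1 = T := Nat.succ_pred_eq_of_pos hT
    have : ∑ j ∈ range T, ((T-1).choose j : ℝ) = 2 ^ (T-1) := by
      rw [← hT1]
      exact_mod_cast congrArg (Nat.cast : ℕ → ℝ) (Nat.sum_range_choose (T-1))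
    rw [this]
  have h2T : (2:ℝ) ^ T = 2 ^ (T-1) * 2 := by
    rw [← pow_succ]
    congr 1
    omega
  -- mean is zero
  have mean : ∑ k ∈ range (T+1), (T.choose k : ℝ) * ((k:ℝ) - T/2) = 0 := by
    simp only [mul_sub]
    rw [Finset.sum_sub_distrib, sum2, ← Finset.sum_mul, sum1, h2T]
    ring
  -- split the sum
  have hmT : m + 1 ≤ T + 1 := by omega
  have split : ∀ f : ℕ → ℝ, ∑ k ∈ range (T+1), f k
      = ∑ k ∈ Ico 0 (m+1), f k + ∑ k ∈ Ico (m+1) (T+1), f k := by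
    intro f
    rw [Finset.range_eq_Ico, ← Finset.sum_Ico_consecutive f (Nat.zero_le _) hmT]
  -- lower part: |k - T/2| = T/2 - k ; upper part: k - T/2
  have abslow : ∀ k ∈ Ico 0 (m+1), (T.choose k : ℝ) * |(k:ℝ) - T/2|
      = (T.choose k : ℝ) * ((T:ℝ)/2 - k) := by
    intro k hk
    rw [mem_Ico] at hk
    have h2k : 2 * k ≤ T := by omega
    have : (k:ℝ) - T/2 ≤ 0 := by
      have : (2*k : ℝ) ≤ T := by exact_mod_cast h2k
      linarith
    rw [abs_of_nonpos this]; ring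
  have absup : ∀ k ∈ Ico (m+1) (T+1), (T.choose k : ℝ) * |(k:ℝ) - T/2|
      = (T.choose k : ℝ) * ((k:ℝ) - T/2) := by
    intro k hk
    rw [mem_Ico] at hk
    have h2k : T < 2 * k := by omega
    have : (0:ℝ) ≤ (k:ℝ) - T/2 := by
      have : (T:ℝ) < 2*k := by exact_mod_cast h2k
      linarith
    rw [abs_of_nonneg this]
  -- S = 2 * B
  set B := ∑ k ∈ Ico (m+1) (T+1), (T.choose k : ℝ) * ((k:ℝ) - T/2) with hB
  have hS : ∑ k ∈ range (T+1), (T.choose k : ℝ) * |(k:ℝ) - T/2| = 2 * B := by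
    rw [split (fun k => (T.choose k : ℝ) * |(k:ℝ) - T/2|)]
    rw [Finset.sum_congr rfl abslow, Finset.sum_congr rfl absup]
    have hmean2 : ∑ k ∈ Ico 0 (m+1), (T.choose k : ℝ) * ((k:ℝ) - T/2) + B = 0 := by
      rw [hB, Finset.sum_Ico_consecutive _ (Nat.zero_le _) hmT, ← Finset.range_eq_Ico, mean]
    have : ∑ k ∈ Ico 0 (m+1), (T.choose k : ℝ) * ((T:ℝ)/2 - k)
        = - ∑ k ∈ Ico 0 (m+1), (T.choose k : ℝ) * ((k:ℝ) - T/2) := by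
      rw [← Finset.sum_neg_distrib]
      exact Finset.sum_congr rfl fun k _ => by ring
    rw [this]; linarith
  -- telescoping: 2*B = T * C(T-1, m)
  have tele : 2 * B = (T:ℝ) * ((T-1).choose m : ℝ) := by
    have hterm : ∀ k ∈ Ico (m+1) (T+1),
        2 * ((T.choose k : ℝ) * ((k:ℝ) - T/2))
        = (T:ℝ) * ((T-1).choose (k-1) : ℝ) - (T:ℝ) * ((T-1).choose k : ℝ) := by
      intro k hk
      rw [mem_Ico] at hk
      have hk1 : 1 ≤ k := by omega
      have hkT : k ≤ T := by omega
      have e1 : (T : ℝ) * ((T-1).choose (k-1) : ℝ) = (T.choose k : ℝ) * k := by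
        have h := hchoose1 (k-1)
        rw [Nat.sub_add_cancel hk1, Nat.cast_sub hk1] at h
        rw [h]; ring
      have e2 : (T : ℝ) * ((T-1).choose k : ℝ) = (T.choose k : ℝ) * ((T:ℝ) - k) := by
        rcases hchoose2 k with h | h
        · exact h
        · omega
      rw [e1, e2]; ring
    rw [hB, Finset.mul_sum, Finset.sum_congr rfl hterm]
    rw [Finset.sum_Ico_eq_sum_range]
    have : ∀ j ∈ range (T + 1 - (m+1)),
        (T:ℝ) * ((T-1).choose (m+1+j-1) : ℝ) - (T:ℝ) * ((T-1).choose (m+1+j) : ℝ)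
        = (fun i => (T:ℝ) * ((T-1).choose (m+i) : ℝ)) j
          - (fun i => (T:ℝ) * ((T-1).choose (m+i) : ℝ)) (j+1) := by
      intro j _
      have e1 : m+1+j-1 = m+j := by omega
      have e2 : m+1+j = m+(j+1) := by omega
      have e5 : m+(j+1)-1 = m+j := by omega
      simp only [e1, e2, e5]
    rw [Finset.sum_congr rfl this, Finset.sum_range_sub']
    have e3 : m + (T + 1 - (m+1)) = T := by omega
    have e4 : T - 1 < T := by omega
    simp only [e3, Nat.add_zero, Nat.choose_eq_zero_of_lt e4]
    simp
  -- final identity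
  have final : (T:ℝ) * ((T-1).choose m : ℝ) = ((m:ℝ) + 1) * (T.choose (m+1) : ℝ) := by
    rw [hchoose1 m]; ring
  -- put it together
  have key : ∑ k ∈ range (T+1), (T.choose k : ℝ) * |(k:ℝ) - T/2|
      = ((m:ℝ) + 1) * (T.choose (m+1) : ℝ) := by
    rw [hS, tele, final]
  calc ∑ k ∈ Finset.range (T + 1), ((T.choose k : ℝ) / 2 ^ T) * |(k : ℝ) - (T : ℝ) / 2|
      = (∑ k ∈ range (T+1), (T.choose k : ℝ) * |(k:ℝ) - T/2|) / 2 ^ T := by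
        rw [Finset.sum_div]
        exact Finset.sum_congr rfl fun k _ => by ring
    _ = ((m:ℝ) + 1) * (T.choose (m+1) : ℝ) / 2 ^ T := by rw [key]
end

section
/- Let X be a nonnegative random variable with finite variance and E[X] > 0. Then E[sqrt(X)] ≥ sqrt(E[X]) * (1 - Var(X) / (2 (E[X])^2)). -/
open MeasureTheory

/-- For a nonnegative random variable `X` with finite variance and `E[X] > 0`,
`E[√X] ≥ √(E[X]) (1 - Var(X) / (2 E[X]^2))`, where `Var(X) = E[X²] - (E[X])²`. -/
theorem stmt_3 {Ω : Type*} [MeasurableSpace Ω] (μ : Measure Ω) [IsProbabilityMeasure μ]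
    (X : Ω → ℝ) (hXnn : ∀ ω, 0 ≤ X ω)
    (hX1 : Integrable X μ) (hX2 : Integrable (fun ω => X ω ^ 2) μ)
    (hpos : 0 < ∫ ω, X ω ∂μ) :
    ∫ ω, Real.sqrt (X ω) ∂μ
      ≥ Real.sqrt (∫ ω, X ω ∂μ) *
          (1 - ((∫ ω, X ω ^ 2 ∂μ) - (∫ ω, X ω ∂μ) ^ 2) /
              (2 * (∫ ω, X ω ∂μ) ^ 2)) := by
  set m := ∫ ω, X ω ∂μ with hm
  set b := Real.sqrt m with hbdef
  have hb : 0 < b := Real.sqrt_pos.2 hpos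
  have hbb : b * b = m := Real.mul_self_sqrt hpos.le
  have hpt : ∀ ω, 3 * X ω / (2 * b) - X ω ^ 2 / (2 * m * b) ≤ Real.sqrt (X ω) := by
    intro ω
    have haa : Real.sqrt (X ω) * Real.sqrt (X ω) = X ω := Real.mul_self_sqrt (hXnn ω)
    set a := Real.sqrt (X ω) with ha
    have han : 0 ≤ a := Real.sqrt_nonneg _
    have hmpos : 0 < m := hpos
    have key : 0 ≤ a * (a - b)^2 * (a + 2*b) := by positivity
    rw [← haa, ← hbb]
    rw [div_sub_div _ _ (by positivity) (by positivity), div_le_iff₀ (by positivity)]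
    nlinarith [mul_nonneg hb.le key]
  have hsm : AEStronglyMeasurable (fun ω => Real.sqrt (X ω)) μ :=
    Real.continuous_sqrt.comp_aestronglyMeasurable hX1.1
  have hint : Integrable (fun ω => Real.sqrt (X ω)) μ := by
    refine Integrable.mono' (hX1.add (integrable_const 1)) hsm (ae_of_all _ fun ω => ?_)
    have haa : Real.sqrt (X ω) * Real.sqrt (X ω) = X ω := Real.mul_self_sqrt (hXnn ω)
    rw [Real.norm_eq_abs, abs_of_nonneg (Real.sqrt_nonneg _), Pi.add_apply]
    nlinarith [sq_nonneg (Real.sqrt (X ω) - 1), Real.sqrt_nonneg (X ω)]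
  have hg : Integrable (fun ω => 3 * X ω / (2 * b) - X ω ^ 2 / (2 * m * b)) μ :=
    ((hX1.const_mul 3).div_const _).sub (hX2.div_const _)
  have hmono : (∫ ω, (3 * X ω / (2 * b) - X ω ^ 2 / (2 * m * b)) ∂μ)
      ≤ ∫ ω, Real.sqrt (X ω) ∂μ := integral_mono hg hint hpt
  rw [integral_sub ((hX1.const_mul 3).div_const _) (hX2.div_const _)] at hmono
  simp only [integral_div, integral_const_mul] at hmono
  have heq : b * (1 - ((∫ ω, X ω ^ 2 ∂μ) - m ^ 2) / (2 * m ^ 2))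
      = 3 * m / (2 * b) - (∫ ω, X ω ^ 2 ∂μ) / (2 * m * b) := by
    rw [← hbb]
    field_simp
    ring
  rw [ge_iff_le, heq]
  exact hmono
end

section
/- Let X ~ Binomial(T, 1/C) with T, C positive integers and C ≥ 1. Then E[sqrt(X)] ≥ sqrt(T/C) - (1/2) * sqrt(C/T). -/
open Finset

private lemma sqrt_lb (μ x : ℝ) (hμ : 0 < μ) (hx : 0 ≤ x) :
    Real.sqrt μ + (x - μ)/(2*Real.sqrt μ) - (x-μ)^2/(2*μ*Real.sqrt μ) ≤ Real.sqrt x := by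
  set s := Real.sqrt x with hs'
  set m := Real.sqrt μ with hm'
  have hs : 0 ≤ s := Real.sqrt_nonneg x
  have hm : 0 < m := Real.sqrt_pos.2 hμ
  have hx2 : s^2 = x := Real.sq_sqrt hx
  have hm2 : m^2 = μ := Real.sq_sqrt hμ.le
  rw [← sub_nonneg]
  have key : s - (m + (x - μ)/(2*m) - (x-μ)^2/(2*μ*m))
      = ((s-m)^2*((s+m)^2 - m^2))/(2*μ*m) := by
    rw [← hx2, ← hm2]
    field_simp
    ring
  rw [key]
  apply div_nonneg _ (by positivity)
  apply mul_nonneg (sq_nonneg _)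
  nlinarith [sq_nonneg s]

private lemma binom_sum1 (n : ℕ) (x y : ℝ) :
    ∑ k ∈ range (n+1), (k:ℝ) * (n.choose k) * x^k * y^(n-k) = n * x * (x+y)^(n-1) := by
  cases n with
  | zero => simp
  | succ m =>
    rw [Finset.sum_range_succ']
    have hcong : ∀ k ∈ range (m+1),
        ((k+1:ℕ):ℝ) * ((m+1).choose (k+1)) * x^(k+1) * y^(m+1-(k+1))
          = ((m+1:ℕ):ℝ) * x * (x^k * y^(m-k) * (m.choose k)) := by
      intro k hk
      have h : ((k+1) * ((m+1).choose (k+1)) : ℕ) = (m+1) * m.choose k := by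
        rw [mul_comm]
        rw [Nat.add_one_mul_choose_eq m k]
      have h' : ((k+1:ℕ):ℝ) * ((m+1).choose (k+1)) = ((m+1:ℕ):ℝ) * (m.choose k) := by
        exact_mod_cast congrArg (Nat.cast (R := ℝ)) h
      have : m + 1 - (k+1) = m - k := by omega
      rw [this, h']
      ring
    rw [Finset.sum_congr rfl hcong]
    rw [← Finset.mul_sum, ← add_pow]
    push_cast
    simp

private lemma binom_sum2 (n : ℕ) (x y : ℝ) :
    ∑ k ∈ range (n+1), (k:ℝ) * ((k:ℝ)-1) * (n.choose k) * x^k * y^(n-k)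
      = n * ((n:ℝ)-1) * x^2 * (x+y)^(n-2) := by
  cases n with
  | zero => simp
  | succ m =>
    rw [Finset.sum_range_succ']
    have hcong : ∀ k ∈ range (m+1),
        ((k+1:ℕ):ℝ) * (((k+1:ℕ):ℝ)-1) * ((m+1).choose (k+1)) * x^(k+1) * y^(m+1-(k+1))
          = ((m+1:ℕ):ℝ) * x * ((k:ℝ) * (m.choose k) * x^k * y^(m-k)) := by
      intro k hk
      have h : ((k+1) * ((m+1).choose (k+1)) : ℕ) = (m+1) * m.choose k := by
        rw [mul_comm]
        rw [Nat.add_one_mul_choose_eq m k]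
      have h' : ((k+1:ℕ):ℝ) * ((m+1).choose (k+1)) = ((m+1:ℕ):ℝ) * (m.choose k) := by
        exact_mod_cast congrArg (Nat.cast (R := ℝ)) h
      have hmk : m + 1 - (k+1) = m - k := by omega
      rw [hmk]
      push_cast
      push_cast at h'
      linear_combination ((k:ℝ) * x^(k+1) * y^(m-k)) * h'
    rw [Finset.sum_congr rfl hcong]
    rw [← Finset.mul_sum, binom_sum1 m x y]
    push_cast
    simp
    ring

/-- For `X ~ Binomial(T, 1/C)` with `T, C` positive integers,
`E[√X] ≥ √(T/C) - (1/2)√(C/T)`. -/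
theorem stmt_4 (T C : ℕ) (hT : 0 < T) (hC : 1 ≤ C) :
    ∑ k ∈ Finset.range (T + 1),
        (T.choose k : ℝ) * (1 / (C : ℝ)) ^ k * (1 - 1 / (C : ℝ)) ^ (T - k) *
          Real.sqrt k
      ≥ Real.sqrt ((T : ℝ) / C) - (1 / 2) * Real.sqrt ((C : ℝ) / T) := by
  have hC0 : (1:ℝ) ≤ (C:ℝ) := by exact_mod_cast hC
  have hT0 : (0:ℝ) < (T:ℝ) := by exact_mod_cast hT
  set p : ℝ := 1 / (C:ℝ) with hp'
  set q : ℝ := 1 - p with hq'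
  have hp : 0 < p := by positivity
  have hp1 : p ≤ 1 := by rw [hp']; rw [div_le_one (by linarith)]; linarith
  have hq : 0 ≤ q := by simp [hq']; linarith
  have hpq : p + q = 1 := by simp [hq']
  set μ : ℝ := T * p with hμ'
  have hμ : 0 < μ := by positivity
  set w : ℕ → ℝ := fun k => (T.choose k : ℝ) * p ^ k * q ^ (T - k) with hw'
  have hw : ∀ k, 0 ≤ w k := fun k => by positivity
  -- moment sums
  have hS0 : ∑ k ∈ range (T+1), w k = 1 := by
    have := add_pow p q T
    rw [hpq, one_pow] at this
    rw [this]
    apply Finset.sum_congr rfl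
    intro k hk; simp [hw']; ring
  have hS1 : ∑ k ∈ range (T+1), (k:ℝ) * w k = μ := by
    have h := binom_sum1 T p q
    rw [hpq, one_pow, mul_one] at h
    rw [hμ', ← h]
    apply Finset.sum_congr rfl
    intro k hk; simp [hw']; ring
  have hS2 : ∑ k ∈ range (T+1), (k:ℝ) * ((k:ℝ)-1) * w k = (T:ℝ) * ((T:ℝ)-1) * p^2 := by
    have h := binom_sum2 T p q
    rw [hpq, one_pow, mul_one] at h
    rw [← h]
    apply Finset.sum_congr rfl
    intro k hk; simp [hw']; ring
  have hVar : ∑ k ∈ range (T+1), ((k:ℝ) - μ)^2 * w k = (T:ℝ) * p * q := by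
    have hexp : ∀ k ∈ range (T+1), ((k:ℝ) - μ)^2 * w k
        = (k:ℝ) * ((k:ℝ)-1) * w k + (1 - 2*μ) * ((k:ℝ) * w k) + μ^2 * w k := by
      intro k _; ring
    rw [Finset.sum_congr rfl hexp]
    rw [Finset.sum_add_distrib, Finset.sum_add_distrib, ← Finset.mul_sum, ← Finset.mul_sum]
    rw [hS0, hS1, hS2]
    rw [hμ', hq']
    ring
  have hVarLe : ∑ k ∈ range (T+1), ((k:ℝ) - μ)^2 * w k ≤ μ := by
    rw [hVar, hμ']
    nlinarith
  set m : ℝ := Real.sqrt μ with hm'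
  have hm : 0 < m := Real.sqrt_pos.2 hμ
  -- lower bound each term
  have hstep : ∑ k ∈ range (T+1),
      w k * (m + ((k:ℝ) - μ)/(2*m) - ((k:ℝ)-μ)^2/(2*μ*m))
      ≤ ∑ k ∈ range (T+1), (T.choose k : ℝ) * p ^ k * q ^ (T - k) * Real.sqrt k := by
    apply Finset.sum_le_sum
    intro k hk
    have := sqrt_lb μ (k:ℝ) hμ (Nat.cast_nonneg k)
    calc w k * (m + ((k:ℝ) - μ)/(2*m) - ((k:ℝ)-μ)^2/(2*μ*m))
        ≤ w k * Real.sqrt k := mul_le_mul_of_nonneg_left this (hw k)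
      _ = (T.choose k : ℝ) * p ^ k * q ^ (T - k) * Real.sqrt k := by rw [hw']
  -- compute the lower sum
  have hval : ∑ k ∈ range (T+1),
      w k * (m + ((k:ℝ) - μ)/(2*m) - ((k:ℝ)-μ)^2/(2*μ*m))
      = m + (μ - μ)/(2*m) - ((T:ℝ)*p*q)/(2*μ*m) := by
    have hexp : ∀ k ∈ range (T+1),
        w k * (m + ((k:ℝ) - μ)/(2*m) - ((k:ℝ)-μ)^2/(2*μ*m))
        = m * w k + (1/(2*m)) * ((k:ℝ) * w k) - (μ/(2*m)) * w k
            - (1/(2*μ*m)) * (((k:ℝ)-μ)^2 * w k) := by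
      intro k _; field_simp; ring
    rw [Finset.sum_congr rfl hexp]
    rw [Finset.sum_sub_distrib, Finset.sum_sub_distrib, Finset.sum_add_distrib,
      ← Finset.mul_sum, ← Finset.mul_sum, ← Finset.mul_sum, ← Finset.mul_sum]
    rw [hS0, hS1, hVar]
    field_simp
    ring
  have hlow : m - 1/(2*m) ≤ ∑ k ∈ range (T+1),
      (T.choose k : ℝ) * p ^ k * q ^ (T - k) * Real.sqrt k := by
    refine le_trans ?_ (le_trans (le_of_eq hval.symm) hstep)
    have hden : (0:ℝ) < 2*μ*m := mul_pos (mul_pos two_pos hμ) hm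
    have hTpq : (T:ℝ)*p*q ≤ μ := by rw [hμ']; nlinarith
    have h1 : ((T:ℝ)*p*q)/(2*μ*m) ≤ μ/(2*μ*m) := by
      exact div_le_div_of_nonneg_right hTpq hden.le
    have h2 : μ/(2*μ*m) = 1/(2*m) := by
      field_simp
    rw [sub_self, zero_div, add_zero]
    linarith [h1, h2]
  -- identify m with √(T/C)
  have hμval : μ = (T:ℝ)/(C:ℝ) := by rw [hμ', hp']; ring
  have hmval : m = Real.sqrt ((T:ℝ)/(C:ℝ)) := by rw [hm', hμval]
  have hfin : (1/2) * Real.sqrt ((C:ℝ)/(T:ℝ)) = 1/(2*m) := by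
    have : (C:ℝ)/(T:ℝ) = ((T:ℝ)/(C:ℝ))⁻¹ := by
      rw [inv_div]
    rw [this, Real.sqrt_inv, hmval]
    ring
  rw [ge_iff_le, hfin]
  calc Real.sqrt ((T:ℝ)/(C:ℝ)) - 1/(2*m) = m - 1/(2*m) := by rw [hmval]
    _ ≤ _ := hlow
end

section
/- Let X ~ Binomial(T, 1/C) with T, C positive integers. Then E[ 1{X > 0} / sqrt(X) ] ≤ sqrt(2C/T) + 4C/T. -/
open Finset

/-- For `X ~ Binomial(T, 1/C)` with `T, C` positive integers,
`E[ 1{X > 0} / √X ] ≤ √(2C/T) + 4C/T`. -/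
theorem stmt_5 (T C : ℕ) (hT : 0 < T) (hC : 0 < C) :
    ∑ k ∈ Finset.range (T + 1),
        (T.choose k : ℝ) * (1 / (C : ℝ)) ^ k * (1 - 1 / (C : ℝ)) ^ (T - k) *
          (if 0 < k then 1 / Real.sqrt k else 0)
      ≤ Real.sqrt (2 * (C : ℝ) / T) + 4 * (C : ℝ) / T := by
  have hC1 : (1 : ℝ) ≤ (C : ℝ) := by exact_mod_cast hC
  have hCpos : (0 : ℝ) < C := by positivity
  have hTpos : (0 : ℝ) < T := by exact_mod_cast hT
  set p : ℝ := 1/(C:ℝ) with hp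
  have hp0 : 0 < p := by positivity
  have hp1 : p ≤ 1 := by rw [hp, div_le_one hCpos]; exact hC1
  set b : ℕ → ℝ := fun k => (T.choose k : ℝ) * p ^ k * (1 - p) ^ (T - k) with hb
  have hbnn : ∀ k, 0 ≤ b k := fun k => by
    have : (0:ℝ) ≤ 1 - p := by linarith
    simp only [hb]; positivity
  have hs := bernsteinPolynomial.sum ℝ T
  have hv := bernsteinPolynomial.variance ℝ T
  apply_fun Polynomial.aeval p at hs hv
  simp only [map_sum, Polynomial.coe_aeval_eq_eval, bernsteinPolynomial, Polynomial.eval_mul,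
    Polynomial.eval_pow, Polynomial.eval_sub, Polynomial.eval_one, Polynomial.eval_X,
    Polynomial.eval_smul, Polynomial.eval_natCast, nsmul_eq_mul, smul_eq_mul] at hs hv
  set s : ℝ := Real.sqrt (2 * (C:ℝ) / T) with hsdef
  have hsnn : (0:ℝ) ≤ s := Real.sqrt_nonneg _
  have hpoint : ∀ k : ℕ, (if 0 < k then 1 / Real.sqrt k else 0)
      ≤ (if (k:ℝ) * (2*C) ≤ T then 1 else 0) + s := by
    intro k
    by_cases hk : 0 < k
    · simp only [hk, if_pos]
      have hk1 : (1:ℝ) ≤ (k:ℝ) := by exact_mod_cast hk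
      by_cases hkk : (k:ℝ) * (2*C) ≤ T
      · rw [if_pos hkk]
        have h1 : 1 ≤ Real.sqrt k := by
          rw [show (1:ℝ) = Real.sqrt 1 by simp]
          exact Real.sqrt_le_sqrt hk1
        have h2 : 0 < Real.sqrt (k:ℝ) := by positivity
        calc 1 / Real.sqrt k ≤ 1 := by rw [div_le_one h2]; exact h1
          _ ≤ _ := by linarith
      · rw [if_neg hkk]
        push_neg at hkk
        have hkpos : (0:ℝ) < k := by linarith
        have h1 : 1 / Real.sqrt k = Real.sqrt ((k:ℝ)⁻¹) := by
          rw [Real.sqrt_inv, one_div]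
        rw [h1]
        have : ((k:ℝ))⁻¹ ≤ 2 * (C:ℝ) / T := by
          rw [inv_le_iff_one_le_mul₀ hkpos] at *
          rw [div_mul_eq_mul_div, le_div_iff₀ hTpos]
          nlinarith
        calc Real.sqrt ((k:ℝ)⁻¹) ≤ s := Real.sqrt_le_sqrt this
          _ ≤ _ := by simp
    · simp only [hk, if_neg, if_false]
      positivity
  calc ∑ k ∈ Finset.range (T + 1), b k * (if 0 < k then 1 / Real.sqrt k else 0)
      ≤ ∑ k ∈ Finset.range (T + 1), b k * ((if (k:ℝ) * (2*C) ≤ T then 1 else 0) + s) := by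
        apply Finset.sum_le_sum
        intro k _
        exact mul_le_mul_of_nonneg_left (hpoint k) (hbnn k)
    _ = (∑ k ∈ Finset.range (T + 1), b k * (if (k:ℝ) * (2*C) ≤ T then 1 else 0))
        + (∑ k ∈ Finset.range (T + 1), b k) * s := by
        rw [Finset.sum_mul, ← Finset.sum_add_distrib]
        apply Finset.sum_congr rfl; intro k _; ring
    _ ≤ (4 * (C:ℝ)^2 / T^2) * (∑ k ∈ Finset.range (T + 1), ((T:ℝ) * p - k)^2 * b k) + 1 * s := by
        rw [hs]
        refine add_le_add ?_ le_rfl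
        rw [Finset.mul_sum]
        apply Finset.sum_le_sum
        intro k _
        by_cases hkk : (k:ℝ) * (2*C) ≤ T
        · rw [if_pos hkk]
          have h1 : (T:ℝ) * p - k ≥ T / (2*C) := by
            rw [hp]
            rw [ge_iff_le, le_sub_iff_add_le, div_add' _ _ _ (by positivity)]
            rw [div_le_iff₀ (by positivity)]
            rw [mul_one_div, div_mul_eq_mul_div, le_div_iff₀ hCpos] at *
            nlinarith
          have h2 : ((T:ℝ) * p - k)^2 ≥ (T / (2*C))^2 := by
            have : (0:ℝ) ≤ T / (2*C) := by positivity
            nlinarith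
          have h3 : (4 * (C:ℝ)^2 / T^2) * (T / (2*C))^2 = 1 := by
            field_simp; ring
          calc b k * 1 = 1 * b k := by ring
            _ ≤ (4 * (C:ℝ)^2 / T^2) * (((T:ℝ) * p - k)^2) * b k := by
              apply mul_le_mul_of_nonneg_right _ (hbnn k)
              rw [← h3]
              apply mul_le_mul_of_nonneg_left h2 (by positivity)
            _ = (4 * (C:ℝ)^2 / T^2) * (((T:ℝ) * p - k)^2 * b k) := by ring
        · rw [if_neg hkk, mul_zero]
          have := hbnn k
          positivity
    _ = (4 * (C:ℝ)^2 / T^2) * ((T:ℝ) * p * (1 - p)) + s := by rw [hv, one_mul]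
    _ ≤ 4 * (C:ℝ) / T + s := by
        have h4 : (4 * (C:ℝ)^2 / T^2) * ((T:ℝ) * p * (1 - p)) ≤ 4 * (C:ℝ) / T := by
          have hq : (1:ℝ) - p ≤ 1 := by linarith
          have : (4 * (C:ℝ)^2 / T^2) * ((T:ℝ) * p * 1) = 4 * (C:ℝ) / T := by
            rw [hp]; field_simp
          have key : (4 * (C:ℝ)^2 / T^2) * ((T:ℝ) * p * (1 - p)) ≤ (4 * (C:ℝ)^2 / T^2) * ((T:ℝ) * p * 1) := by
            apply mul_le_mul_of_nonneg_left _ (by positivity)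
            apply mul_le_mul_of_nonneg_left hq (by positivity)
          linarith
        linarith
    _ = s + 4 * (C:ℝ) / T := by ring
end

section
/- Let Z ~ Binomial(T, 1/2) for an even positive integer T. Then E|Z - T/2| ≥ sqrt(T/(2π)) - 1/(3 sqrt(2πT)). -/
open Finset Real

section StirlingAux
open Filter Nat Stirling Topology

-- sum k * choose
lemma my_sum_mul_choose (n : ℕ) : ∑ k ∈ range (n+2), k * (n+1).choose k = (n+1) * 2^n := by
  rw [Finset.sum_range_succ']
  simp only [Nat.zero_eq, zero_mul, add_zero]
  calc ∑ j ∈ range (n+1), (j+1) * (n+1).choose (j+1)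
      = ∑ j ∈ range (n+1), (n+1) * n.choose j := by
        refine Finset.sum_congr rfl fun j _ => ?_
        rw [mul_comm, Nat.add_one_mul_choose_eq, mul_comm]
    _ = (n+1) * 2^n := by rw [← Finset.mul_sum, Nat.sum_range_choose]

lemma my_E_zero (s : ℕ) :
    ∑ k ∈ range (2*s+3), ((2*s+2).choose k : ℝ) * ((k:ℝ) - ((s:ℝ)+1)) = 0 := by
  have h1 : ∑ k ∈ range (2*s+3), ((k:ℝ)) * ((2*s+2).choose k : ℝ)
      = ((2*s+2 : ℕ) : ℝ) * 2^(2*s+1) := by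
    have := my_sum_mul_choose (2*s+1)
    have h2 : (2*s+1)+2 = 2*s+3 := by omega
    have h3 : (2*s+1)+1 = 2*s+2 := by omega
    rw [h2, h3] at this
    exact_mod_cast congrArg (Nat.cast (R := ℝ)) this
  have h4 : ∑ k ∈ range (2*s+3), ((2*s+2).choose k : ℝ) = 2^(2*s+2) := by
    have := Nat.sum_range_choose (2*s+2)
    exact_mod_cast congrArg (Nat.cast (R := ℝ)) this
  have expand : ∑ k ∈ range (2*s+3), ((2*s+2).choose k : ℝ) * ((k:ℝ) - ((s:ℝ)+1))
      = (∑ k ∈ range (2*s+3), ((k:ℝ)) * ((2*s+2).choose k : ℝ))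
        - ((s:ℝ)+1) * ∑ k ∈ range (2*s+3), ((2*s+2).choose k : ℝ) := by
    rw [Finset.mul_sum, ← Finset.sum_sub_distrib]
    exact Finset.sum_congr rfl fun k _ => by ring
  rw [expand, h1, h4]
  push_cast
  ring

lemma my_choose_two_mul (s : ℕ) : (2*s+2).choose (s+1) = 2 * ((2*s+1).choose (s+1)) := by
  have h : (2*s+2).choose (s+1) = (2*s+1).choose s + (2*s+1).choose (s+1) :=
    Nat.choose_succ_succ' (2*s+1) s ▸ rfl
  have h2 : (2*s+1).choose s = (2*s+1).choose (s+1) := by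
    rw [← Nat.choose_symm (by omega : s ≤ 2*s+1)]
    congr 1; omega
  omega

lemma my_A_eq (s : ℕ) :
    ∑ k ∈ range (s+2), (((s:ℝ)+1) - k) * ((2*s+2).choose k : ℝ)
      = ((s:ℝ)+1) * ((2*s+1).choose (s+1) : ℝ) := by
  rw [Finset.sum_range_succ']
  push_cast
  have hterm : ∀ j ∈ range (s+1), (((s:ℝ)+1) - ((j:ℝ)+1)) * ((2*s+2).choose (j+1) : ℝ)
      = ((s:ℝ)+1) * (((2*s+1).choose (j+1) : ℝ) - ((2*s+1).choose j : ℝ)) := by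
    intro j _
    have h1 : ((2*s+1)+1 : ℝ) * ((2*s+1).choose j : ℝ) = ((2*s+2).choose (j+1) : ℝ) * (j+1) := by
      exact_mod_cast congrArg (Nat.cast (R := ℝ)) (Nat.add_one_mul_choose_eq (2*s+1) j)
    have h2 : ((2*s+2).choose (j+1) : ℝ) = ((2*s+1).choose j : ℝ) + ((2*s+1).choose (j+1) : ℝ) := by
      exact_mod_cast congrArg (Nat.cast (R := ℝ)) (Nat.choose_succ_succ' (2*s+1) j)
    push_cast at h1 h2 ⊢
    nlinarith [h1, h2]
  rw [Finset.sum_congr rfl hterm, ← Finset.mul_sum, Finset.sum_range_sub (fun j => ((2*s+1).choose j : ℝ))]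
  simp
  ring

lemma my_abs_eq (x : ℝ) : |x| = x + 2 * max (-x) 0 := by
  rcases le_total 0 x with h | h
  · rw [abs_of_nonneg h, max_eq_right (by linarith)]; ring
  · rw [abs_of_nonpos h, max_eq_left (by linarith)]; ring

lemma my_mad (s : ℕ) :
    ∑ k ∈ range (2*s+3), ((2*s+2).choose k : ℝ) * |(k:ℝ) - ((s:ℝ)+1)|
      = ((s:ℝ)+1) * ((2*s+2).choose (s+1) : ℝ) := by
  have split : ∑ k ∈ range (2*s+3), ((2*s+2).choose k : ℝ) * |(k:ℝ) - ((s:ℝ)+1)|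
      = ∑ k ∈ range (2*s+3), ((2*s+2).choose k : ℝ) * ((k:ℝ) - ((s:ℝ)+1))
        + 2 * ∑ k ∈ range (2*s+3), ((2*s+2).choose k : ℝ) * max (((s:ℝ)+1) - k) 0 := by
    rw [Finset.mul_sum, ← Finset.sum_add_distrib]
    refine Finset.sum_congr rfl fun k _ => ?_
    rw [my_abs_eq ((k:ℝ) - ((s:ℝ)+1))]
    have : -((k:ℝ) - ((s:ℝ)+1)) = ((s:ℝ)+1) - k := by ring
    rw [this]; ring
  have hQ : ∑ k ∈ range (2*s+3), ((2*s+2).choose k : ℝ) * max (((s:ℝ)+1) - k) 0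
      = ∑ k ∈ range (s+2), (((s:ℝ)+1) - k) * ((2*s+2).choose k : ℝ) := by
    rw [← Finset.sum_subset (Finset.range_subset_range.mpr (by omega : s+2 ≤ 2*s+3))]
    · refine Finset.sum_congr rfl fun k hk => ?_
      have hk' : k ≤ s + 1 := by simpa using Nat.lt_succ_iff.mp (Finset.mem_range.mp hk)
      have : max (((s:ℝ)+1) - k) 0 = ((s:ℝ)+1) - k := by
        apply max_eq_left
        have : (k:ℝ) ≤ (s:ℝ) + 1 := by exact_mod_cast hk'
        linarith
      rw [this]; ring
    · intro k _ hk
      have hk' : s + 2 ≤ k := by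
        by_contra h
        exact hk (Finset.mem_range.mpr (by omega))
      have : max (((s:ℝ)+1) - k) 0 = 0 := by
        apply max_eq_right
        have : (s:ℝ) + 2 ≤ (k:ℝ) := by exact_mod_cast hk'
        linarith
      rw [this, mul_zero]
  rw [split, my_E_zero, hQ, my_A_eq, zero_add, my_choose_two_mul]
  push_cast
  ring

lemma my_log_diff (n : ℕ) :
    Real.log (stirlingSeq (n+1)) - Real.log (stirlingSeq (n+2))
      ≤ 1/(12*((n:ℝ)+1)) - 1/(12*((n:ℝ)+2)) := by
  set q : ℝ := ((1 : ℝ) / (2 * ↑(n + 1) + 1)) ^ 2 with hq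
  have hq_nonneg : (0:ℝ) ≤ q := sq_nonneg _
  have hq_lt : q < 1 := by
    rw [hq, one_div, inv_pow]
    exact inv_lt_one_of_one_lt₀ (one_lt_pow₀ (by push_cast; nlinarith [Nat.cast_nonneg (α := ℝ) n]) two_ne_zero)
  have g : HasSum (fun k : ℕ => (1/3 : ℝ) * q ^ (k+1)) ((1/3) * (q / (1 - q))) := by
    have := (hasSum_geometric_of_lt_one hq_nonneg hq_lt).mul_left q
    simp_rw [← _root_.pow_succ'] at this
    exact this.mul_left (1/3)
  have hab : ∀ k : ℕ, (1 : ℝ) / (2 * ↑(k + 1) + 1) * q ^ (k+1) ≤ (1/3 : ℝ) * q ^ (k+1) := by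
    intro k
    apply mul_le_mul_of_nonneg_right _ (pow_nonneg hq_nonneg _)
    rw [div_le_div_iff₀ (by positivity) (by norm_num)]
    push_cast; nlinarith [Nat.cast_nonneg (α := ℝ) k]
  have hle := hasSum_le hab (log_stirlingSeq_diff_hasSum n) g
  refine hle.trans (le_of_eq ?_)
  have hpos : 0 < 1 - q := by linarith
  rw [hq] at hpos ⊢
  push_cast at hpos ⊢
  have h24 : (24 + (n:ℝ)*36 + (n:ℝ)^2*12) ≠ 0 := by positivity
  field_simp
  have hA : (8 + (n:ℝ)*12 + (n:ℝ)^2*4) ≠ 0 := by positivity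
  linear_combination (3:ℝ) * mul_inv_cancel₀ hA

lemma my_log_upper (n : ℕ) : ∀ N, n ≤ N →
    Real.log (stirlingSeq (n+1)) - Real.log (stirlingSeq (N+1))
      ≤ 1/(12*((n:ℝ)+1)) - 1/(12*((N:ℝ)+1)) := by
  intro N hN
  induction N with
  | zero => simp_all
  | succ M ih =>
    rcases Nat.lt_or_ge n (M+1) with h | h
    · have hM : n ≤ M := by omega
      have := my_log_diff M
      have h2 := ih hM
      have e : stirlingSeq (M+1+1) = stirlingSeq (M+2) := rfl
      push_cast at this h2 ⊢
      have e2 : (1:ℝ)/(12*((M:ℝ)+1+1)) = 1/(12*((M:ℝ)+2)) := by ring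
      rw [e, e2]
      linarith
    · have : n = M + 1 := by omega
      subst this; simp

lemma my_stirling_lower (n : ℕ) : Real.sqrt π ≤ stirlingSeq (n+1) := by
  have ht : Tendsto (fun N : ℕ => stirlingSeq (N+1)) atTop (𝓝 (Real.sqrt π)) :=
    tendsto_stirlingSeq_sqrt_pi.comp (tendsto_add_atTop_nat 1)
  refine le_of_tendsto ht ?_
  filter_upwards [eventually_ge_atTop n] with N hN
  exact stirlingSeq'_antitone hN

lemma my_stirling_upper (n : ℕ) :
    stirlingSeq (n+1) ≤ Real.sqrt π * Real.exp (1/(12*((n:ℝ)+1))) := by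
  have hπ : 0 < Real.sqrt π := Real.sqrt_pos.mpr pi_pos
  have hlog : Real.log (stirlingSeq (n+1)) ≤ Real.log (Real.sqrt π) + 1/(12*((n:ℝ)+1)) := by
    have ht : Tendsto (fun N : ℕ => Real.log (stirlingSeq (N+1)) + 1/(12*((n:ℝ)+1)))
        atTop (𝓝 (Real.log (Real.sqrt π) + 1/(12*((n:ℝ)+1)))) := by
      exact (((Real.continuousAt_log hπ.ne').tendsto.comp
        (tendsto_stirlingSeq_sqrt_pi.comp (tendsto_add_atTop_nat 1))).add tendsto_const_nhds)
    refine ge_of_tendsto ht ?_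
    filter_upwards [eventually_ge_atTop n] with N hN
    have h := my_log_upper n N hN
    have h2 : (0:ℝ) ≤ 1/(12*((N:ℝ)+1)) := by positivity
    linarith
  calc stirlingSeq (n+1) = Real.exp (Real.log (stirlingSeq (n+1))) :=
        (Real.exp_log (stirlingSeq'_pos n)).symm
    _ ≤ Real.exp (Real.log (Real.sqrt π) + 1/(12*((n:ℝ)+1))) := Real.exp_le_exp.mpr hlog
    _ = Real.sqrt π * Real.exp (1/(12*((n:ℝ)+1))) := by rw [Real.exp_add, Real.exp_log hπ]

lemma my_central_formula (m : ℕ) (hm : 0 < m) :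
    ((2*m).choose m : ℝ) / 4^m = stirlingSeq (2*m) / (stirlingSeq m ^ 2 * Real.sqrt m) := by
  have hE : (0:ℝ) < Real.exp 1 := Real.exp_pos 1
  have hm' : (0:ℝ) < m := by exact_mod_cast hm
  set a := Real.sqrt (m:ℝ) with ha_def
  have ha : 0 < a := Real.sqrt_pos.mpr hm'
  have ha2 : a^2 = m := Real.sq_sqrt hm'.le
  have hfac : ((2*m).choose m : ℝ) * (m ! : ℝ) * (m ! : ℝ) = ((2*m)! : ℝ) := by
    have := Nat.choose_mul_factorial_mul_factorial (by omega : m ≤ 2*m)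
    have h2 : 2*m - m = m := by omega
    rw [h2] at this
    exact_mod_cast congrArg (Nat.cast (R := ℝ)) this
  have hs4 : Real.sqrt (2*((2*m : ℕ):ℝ)) = 2*a := by
    have h : (2:ℝ)*((2*m : ℕ):ℝ) = (2*a)^2 := by push_cast; nlinarith [ha2]
    rw [h, Real.sqrt_sq (by positivity)]
  have hs2 : Real.sqrt (2*(m:ℝ)) = Real.sqrt 2 * a := Real.sqrt_mul (by norm_num) m
  have hpow : (((2*m : ℕ):ℝ)/Real.exp 1)^(2*m) = 4^m * (((m:ℝ)/Real.exp 1)^m)^2 := by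
    push_cast
    rw [mul_div_assoc, mul_pow,
      show (2:ℝ)^(2*m) = 4^m by rw [pow_mul]; norm_num,
      show ((m:ℝ)/Real.exp 1)^(2*m) = (((m:ℝ)/Real.exp 1)^m)^2 by rw [← pow_mul, mul_comm]]
  have hfacpos : (0:ℝ) < (m ! : ℝ) := by exact_mod_cast Nat.factorial_pos m
  have hpm : (0:ℝ) < ((m:ℝ)/Real.exp 1)^m := by positivity
  rw [stirlingSeq, stirlingSeq, hs4, hs2, hpow]
  have h2 : (0:ℝ) < Real.sqrt 2 := by positivity
  have h2sq : (Real.sqrt 2)^2 = 2 := Real.sq_sqrt (by norm_num)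
  field_simp
  have hfac2 : ((m*2).choose m : ℝ) * (m ! : ℝ) * (m ! : ℝ) = ((m*2)! : ℝ) := by
    rw [mul_comm m 2]; exact hfac
  ring_nf
  linear_combination (2:ℝ) * hfac2
    - ((((m*2)! : ℕ) : ℝ)) * h2sq

lemma my_central_lower (m : ℕ) (hm : 0 < m) :
    Real.exp (-(1/(6*(m:ℝ)))) / Real.sqrt (π * m) ≤ ((2*m).choose m : ℝ)/4^m := by
  have hm' : (0:ℝ) < m := by exact_mod_cast hm
  have hπ : 0 < Real.sqrt π := Real.sqrt_pos.mpr pi_pos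
  have ha : 0 < Real.sqrt (m:ℝ) := Real.sqrt_pos.mpr hm'
  have hs2m : Real.sqrt π ≤ stirlingSeq (2*m) := by
    have := my_stirling_lower (2*m-1)
    have h : 2*m-1+1 = 2*m := by omega
    rwa [h] at this
  have hsm : stirlingSeq m ≤ Real.sqrt π * Real.exp (1/(12*(m:ℝ))) := by
    have := my_stirling_upper (m-1)
    have h : m-1+1 = m := by omega
    have hc : ((m-1 : ℕ):ℝ) + 1 = (m:ℝ) := by
      rw [Nat.cast_sub hm]; ring
    rwa [h, hc] at this
  have hsm_pos : 0 < stirlingSeq m := by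
    have := stirlingSeq'_pos (m-1)
    have h : m-1+1 = m := by omega
    rwa [h] at this
  have hsq : stirlingSeq m ^ 2 ≤ π * Real.exp (1/(6*(m:ℝ))) := by
    have h1 : stirlingSeq m ^ 2 ≤ (Real.sqrt π * Real.exp (1/(12*(m:ℝ))))^2 := by
      apply pow_le_pow_left₀ hsm_pos.le hsm
    refine h1.trans (le_of_eq ?_)
    rw [mul_pow, Real.sq_sqrt pi_pos.le, sq (Real.exp _), ← Real.exp_add]
    congr 1
    field_simp
    ring
  have hππ : Real.sqrt π * Real.sqrt π = π := Real.mul_self_sqrt pi_pos.le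
  have hsqrtmul : Real.sqrt (π * (m:ℝ)) = Real.sqrt π * Real.sqrt (m:ℝ) :=
    Real.sqrt_mul pi_pos.le _
  have hid : Real.exp (-(1/(6*(m:ℝ)))) / Real.sqrt (π * m)
      = Real.sqrt π / (π * Real.exp (1/(6*(m:ℝ))) * Real.sqrt (m:ℝ)) := by
    rw [hsqrtmul, Real.exp_neg]
    have he : 0 < Real.exp (1/(6*(m:ℝ))) := Real.exp_pos _
    field_simp
    have hππ2 : Real.sqrt π ^ 2 = π := Real.sq_sqrt pi_pos.le
    linear_combination (-1 : ℝ) * hππ2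
  rw [hid, my_central_formula m hm]
  apply div_le_div₀ (lt_of_lt_of_le hπ hs2m).le hs2m (by positivity)
  have : 0 ≤ Real.sqrt (m:ℝ) := ha.le
  nlinarith [hsq, ha, Real.exp_pos (1/(6*(m:ℝ)))]

lemma my_key (m : ℕ) (hm : 0 < m) :
    (m:ℝ) * (((2*m).choose m : ℝ)/4^m)
      ≥ Real.sqrt ((m:ℝ)/π) - 1/(6*Real.sqrt (π*(m:ℝ))) := by
  have hm' : (0:ℝ) < m := by exact_mod_cast hm
  have hπm : 0 < Real.sqrt (π*(m:ℝ)) := Real.sqrt_pos.mpr (by positivity)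
  have h1 : (m:ℝ) * (Real.exp (-(1/(6*(m:ℝ)))) / Real.sqrt (π * m))
      ≤ (m:ℝ) * (((2*m).choose m : ℝ)/4^m) :=
    mul_le_mul_of_nonneg_left (my_central_lower m hm) hm'.le
  refine le_trans ?_ h1
  have hexp : 1 - 1/(6*(m:ℝ)) ≤ Real.exp (-(1/(6*(m:ℝ)))) := by
    have := Real.add_one_le_exp (-(1/(6*(m:ℝ))))
    linarith
  have h2 : (m:ℝ) * ((1 - 1/(6*(m:ℝ))) / Real.sqrt (π * m))
      ≤ (m:ℝ) * (Real.exp (-(1/(6*(m:ℝ)))) / Real.sqrt (π * m)) := by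
    apply mul_le_mul_of_nonneg_left _ hm'.le
    exact div_le_div_of_nonneg_right hexp hπm.le
  refine le_trans (le_of_eq ?_) h2
  have hmm : Real.sqrt (m:ℝ) * Real.sqrt (m:ℝ) = (m:ℝ) := Real.mul_self_sqrt hm'.le
  have hsplit : Real.sqrt (π*(m:ℝ)) = Real.sqrt π * Real.sqrt (m:ℝ) := Real.sqrt_mul pi_pos.le _
  have hdiv : Real.sqrt ((m:ℝ)/π) = Real.sqrt (m:ℝ) / Real.sqrt π := Real.sqrt_div hm'.le π
  have hπ : 0 < Real.sqrt π := Real.sqrt_pos.mpr pi_pos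
  have hsm : 0 < Real.sqrt (m:ℝ) := Real.sqrt_pos.mpr hm'
  rw [hdiv, hsplit]
  field_simp
  have hmm2 : Real.sqrt (m:ℝ) ^ 2 = (m:ℝ) := Real.sq_sqrt hm'.le
  linear_combination (6:ℝ) * hmm2

end StirlingAux

/-- For `Z ~ Binomial(T, 1/2)` with `T` an even positive integer,
`E|Z - T/2| ≥ √(T/(2π)) - 1/(3√(2πT))`. -/
theorem stmt_7 (T : ℕ) (hT : 0 < T) (hTeven : Even T) :
    ∑ k ∈ Finset.range (T + 1),
        ((T.choose k : ℝ) / 2 ^ T) * |(k : ℝ) - (T : ℝ) / 2|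
      ≥ Real.sqrt ((T : ℝ) / (2 * π)) - 1 / (3 * Real.sqrt (2 * π * T)) := by
  obtain ⟨mm, rfl⟩ := hTeven
  obtain ⟨s, rfl⟩ : ∃ s, mm = s + 1 := ⟨mm - 1, by omega⟩
  rw [show (s+1) + (s+1) = 2*s+2 from by omega]
  have hsum : ∑ k ∈ Finset.range (2*s+2+1),
      (((2*s+2).choose k : ℝ) / 2 ^ (2*s+2)) * |(k : ℝ) - ((2*s+2 : ℕ) : ℝ) / 2|
      = (((s:ℝ)+1) * ((2*s+2).choose (s+1) : ℝ)) / 2^(2*s+2) := by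
    rw [show 2*s+2+1 = 2*s+3 from rfl, ← my_mad s, Finset.sum_div]
    refine Finset.sum_congr rfl fun k _ => ?_
    have : ((2*s+2 : ℕ) : ℝ) / 2 = (s:ℝ)+1 := by push_cast; ring
    rw [this]
    ring
  rw [hsum]
  have hkey := my_key (s+1) (by omega)
  have e1 : 2*(s+1) = 2*s+2 := by omega
  rw [e1] at hkey
  push_cast at hkey
  have e2 : (((s:ℝ)+1) * ((2*s+2).choose (s+1) : ℝ)) / 2^(2*s+2)
      = ((s:ℝ)+1) * (((2*s+2).choose (s+1) : ℝ) / 4^(s+1)) := by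
    rw [show (2:ℝ)^(2*s+2) = 4^(s+1) from by
      rw [show 2*s+2 = 2*(s+1) from by omega, pow_mul]; norm_num]
    ring
  rw [e2]
  have e3 : Real.sqrt (((2*s+2 : ℕ):ℝ) / (2*π)) = Real.sqrt (((s:ℝ)+1)/π) := by
    congr 1
    push_cast
    rw [div_eq_div_iff (by positivity) (by positivity)]
    ring
  have e4 : Real.sqrt (2*π*((2*s+2 : ℕ):ℝ)) = 2 * Real.sqrt (π*((s:ℝ)+1)) := by
    rw [show (2*π*((2*s+2 : ℕ):ℝ)) = 2^2*(π*((s:ℝ)+1)) from by push_cast; ring,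
      Real.sqrt_mul (by positivity), Real.sqrt_sq (by norm_num : (0:ℝ) ≤ 2)]
  rw [e3, e4]
  have : 1 / (3 * (2 * Real.sqrt (π*((s:ℝ)+1)))) = 1/(6*Real.sqrt (π*((s:ℝ)+1))) := by
    ring_nf
  rw [this]
  exact hkey
end

section
/- Let Z ~ Binomial(T, 1/2) for any positive integer T. Then E|Z - T/2| ≥ sqrt(T/(2π)) - 1/(2 sqrt(2πT)). -/
open Finset Real

lemma wallis_key (m : ℕ) : 2 * 16 ^ m ≤ π * ((2 * m).choose m : ℝ) ^ 2 * (2 * m + 1) := by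
  have h := Real.Wallis.W_le m
  rw [Real.Wallis.W_eq_factorial_ratio] at h
  have hfac : ((2 * m).factorial : ℝ) = ((2 * m).choose m : ℝ) * m.factorial * m.factorial := by
    have := Nat.choose_mul_factorial_mul_factorial (by omega : m ≤ 2 * m)
    rw [(by omega : 2 * m - m = m)] at this
    exact_mod_cast this.symm
  have hden : (0:ℝ) < ((2 * m).factorial : ℝ) ^ 2 * (2 * m + 1) := by positivity
  rw [div_le_iff₀ hden] at h
  have hpow : (2:ℝ) ^ (4 * m) = 16 ^ m := by
    rw [pow_mul]; norm_num
  have hfpos : (0:ℝ) < (m.factorial : ℝ) ^ 4 := by positivity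
  rw [hpow, hfac] at h
  nlinarith [h, hfpos, sq_nonneg ((m.factorial : ℝ))]

lemma term_eq (n k : ℕ) : ((n+1).choose (k+1) : ℝ) * (2*(k+1) - (n+1)) =
    (n+1) * (n.choose k) - (n+1) * (n.choose (k+1)) := by
  have h1 : ((n+1 : ℕ) : ℝ) * (n.choose k) = ((n+1).choose (k+1) : ℝ) * (k+1) := by
    exact_mod_cast congrArg (Nat.cast (R := ℝ)) (Nat.add_one_mul_choose_eq n k)
  have h2 : (((n+1)).choose (k+1) : ℝ) = (n.choose k : ℝ) + (n.choose (k+1) : ℝ) := by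
    exact_mod_cast congrArg (Nat.cast (R := ℝ)) (Nat.choose_succ_succ n k)
  push_cast at h1 h2 ⊢
  nlinarith [h1, h2]

lemma tele (n c : ℕ) (hc : c ≤ n + 1) :
    ∑ k ∈ Finset.Ico (c+1) (n+2), ((n+1).choose k : ℝ) * (2*k - (n+1)) =
      (n+1) * (n.choose c) := by
  rw [Finset.sum_Ico_eq_sum_range]
  rw [(by omega : n + 2 - (c+1) = n + 1 - c)]
  have hcong : ∀ i ∈ Finset.range (n+1-c),
      ((n+1).choose (c+1+i) : ℝ) * (2*((c+1+i : ℕ) : ℝ) - (n+1)) =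
      (fun j => ((n:ℝ)+1) * (n.choose (c+j))) i - (fun j => ((n:ℝ)+1) * (n.choose (c+j))) (i+1) := by
    intro i _
    have := term_eq n (c+i)
    simp only []
    rw [(by omega : c+1+i = (c+i)+1)]
    push_cast at this ⊢
    rw [(by omega : c + (i+1) = c + i + 1)]
    linarith [this]
  rw [Finset.sum_congr rfl hcong, Finset.sum_range_sub']
  rw [(by omega : c + (n+1-c) = n+1), Nat.choose_succ_self]
  push_cast
  ring

lemma sum_choose_real (n : ℕ) : ∑ k ∈ Finset.range (n+1), (n.choose k : ℝ) = 2 ^ n := by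
  exact_mod_cast congrArg (Nat.cast (R := ℝ)) (Nat.sum_range_choose n)

lemma sum_mul_choose (n : ℕ) :
    ∑ k ∈ Finset.range (n+2), ((n+1).choose k : ℝ) * k = (n+1) * 2 ^ n := by
  rw [Finset.sum_range_succ']
  have hcong : ∀ i ∈ Finset.range (n+1),
      ((n+1).choose (i+1) : ℝ) * ((i+1 : ℕ) : ℝ) = ((n:ℝ)+1) * (n.choose i) := by
    intro i _
    have : ((n+1 : ℕ) : ℝ) * (n.choose i) = ((n+1).choose (i+1) : ℝ) * (i+1) := by
      exact_mod_cast congrArg (Nat.cast (R := ℝ)) (Nat.add_one_mul_choose_eq n i)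
    push_cast at this ⊢
    linarith
  rw [Finset.sum_congr rfl hcong, ← Finset.mul_sum, sum_choose_real]
  push_cast
  ring

lemma signed_zero (n : ℕ) :
    ∑ k ∈ Finset.range (n+2), ((n+1).choose k : ℝ) * (2*(k:ℝ) - (n+1)) = 0 := by
  have hcong : ∀ k ∈ Finset.range (n+2),
      ((n+1).choose k : ℝ) * (2*(k:ℝ) - (n+1)) =
        2 * (((n+1).choose k : ℝ) * k) - ((n:ℝ)+1) * ((n+1).choose k : ℝ) := by
    intro k _; ring
  rw [Finset.sum_congr rfl hcong, Finset.sum_sub_distrib, ← Finset.mul_sum, ← Finset.mul_sum,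
    sum_mul_choose]
  have := sum_choose_real (n+1)
  push_cast at this ⊢
  rw [this]
  ring

lemma P_eq (n : ℕ) :
    ∑ k ∈ Finset.range (n+2), ((n+1).choose k : ℝ) * max (2*(k:ℝ) - (n+1)) 0 =
      (n+1) * (n.choose ((n+1)/2)) := by
  set c := (n+1)/2 with hc
  have hc1 : c + 1 ≤ n + 2 := by omega
  rw [Finset.range_eq_Ico, ← Finset.sum_Ico_consecutive _ (Nat.zero_le (c+1)) hc1]
  have hlow : ∑ k ∈ Finset.Ico 0 (c+1), ((n+1).choose k : ℝ) * max (2*(k:ℝ) - (n+1)) 0 = 0 := by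
    apply Finset.sum_eq_zero
    intro k hk
    rw [Finset.mem_Ico] at hk
    have : (2*(k:ℝ) - (n+1)) ≤ 0 := by
      have : 2 * k ≤ n + 1 := by omega
      have := (Nat.cast_le (α := ℝ)).2 this
      push_cast at this
      linarith
    rw [max_eq_right this, mul_zero]
  have hup : ∀ k ∈ Finset.Ico (c+1) (n+2),
      ((n+1).choose k : ℝ) * max (2*(k:ℝ) - (n+1)) 0 =
      ((n+1).choose k : ℝ) * (2*(k:ℝ) - (n+1)) := by
    intro k hk
    rw [Finset.mem_Ico] at hk
    have h2 : n + 2 ≤ 2 * k := by omega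
    have : (0:ℝ) ≤ 2*(k:ℝ) - (n+1) := by
      have := (Nat.cast_le (α := ℝ)).2 h2
      push_cast at this
      linarith
    rw [max_eq_left this]
  rw [hlow, Finset.sum_congr rfl hup, tele n c (by omega), zero_add]

lemma A_eq (n : ℕ) :
    ∑ k ∈ Finset.range (n+2), ((n+1).choose k : ℝ) * |2*(k:ℝ) - (n+1)| =
      2 * ((n+1) * (n.choose ((n+1)/2))) := by
  have habs : ∀ x : ℝ, |x| = 2 * max x 0 - x := by
    intro x
    rcases le_total x 0 with h | h
    · rw [abs_of_nonpos h, max_eq_right h]; ring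
    · rw [abs_of_nonneg h, max_eq_left h]; ring
  have hcong : ∀ k ∈ Finset.range (n+2),
      ((n+1).choose k : ℝ) * |2*(k:ℝ) - (n+1)| =
      2 * (((n+1).choose k : ℝ) * max (2*(k:ℝ) - (n+1)) 0)
        - ((n+1).choose k : ℝ) * (2*(k:ℝ) - (n+1)) := by
    intro k _
    rw [habs]
    ring
  rw [Finset.sum_congr rfl hcong, Finset.sum_sub_distrib, ← Finset.mul_sum, P_eq,
    signed_zero n, sub_zero]

-- half-choose relation: for m ≥ 1, 2 * (2m-1).choose m = (2m).choose m
lemma half_choose (s : ℕ) : 2 * ((2*s+1).choose (s+1)) = (2*s+2).choose (s+1) := by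
  have hsymm : (2*s+1).choose s = (2*s+1).choose (s+1) := by
    have := Nat.choose_symm (by omega : s+1 ≤ 2*s+1)
    rw [(by omega : 2*s+1 - (s+1) = s)] at this
    exact this
  have hp : (2*s+2).choose (s+1) = (2*s+1).choose s + (2*s+1).choose (s+1) := by
    exact Nat.choose_succ_succ (2*s+1) s
  omega

/-- For `Z ~ Binomial(T, 1/2)` with `T` any positive integer,
`E|Z - T/2| ≥ √(T/(2π)) - 1/(2√(2πT))`. -/
theorem stmt_8 (T : ℕ) (hT : 0 < T) :
    ∑ k ∈ Finset.range (T + 1),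
        ((T.choose k : ℝ) / 2 ^ T) * |(k : ℝ) - (T : ℝ) / 2|
      ≥ Real.sqrt ((T : ℝ) / (2 * π)) - 1 / (2 * Real.sqrt (2 * π * T)) := by
  obtain ⟨n, rfl⟩ : ∃ n, T = n + 1 := ⟨T - 1, by omega⟩
  set T := n + 1 with hTdef
  -- Step 1: LHS = T * (n.choose (T/2)) / 2^T
  have hLHS : ∑ k ∈ Finset.range (T + 1),
      ((T.choose k : ℝ) / 2 ^ T) * |(k : ℝ) - (T : ℝ) / 2|
      = (T : ℝ) * (n.choose (T/2)) / 2 ^ T := by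
    have hcong : ∀ k ∈ Finset.range (T + 1),
        ((T.choose k : ℝ) / 2 ^ T) * |(k : ℝ) - (T : ℝ) / 2|
        = ((T.choose k : ℝ) * |2*(k:ℝ) - (T:ℝ)|) * (1 / 2 ^ (T+1)) := by
      intro k _
      have : |(k : ℝ) - (T : ℝ) / 2| = |2*(k:ℝ) - (T:ℝ)| / 2 := by
        rw [show (k:ℝ) - (T:ℝ)/2 = (2*(k:ℝ) - (T:ℝ))/2 by ring, abs_div, abs_two]
      rw [this, pow_succ]
      ring
    rw [Finset.sum_congr rfl hcong, ← Finset.sum_mul]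
    have := A_eq n
    rw [hTdef]
    push_cast at this ⊢
    rw [(by omega : n + 1 + 1 = n + 2), this]
    have h2 : (2:ℝ) ^ (n+1+1) = 2 ^ (n+1) * 2 := by ring
    rw [h2]
    field_simp
  rw [hLHS, ge_iff_le]
  -- Step 2: rewrite RHS as (2T-1)/(2*sqrt(2πT))
  set D : ℝ := (n.choose (T/2) : ℝ) with hD
  have hDpos : 0 < D := by
    rw [hD]
    have : T/2 ≤ n := by omega
    exact_mod_cast Nat.choose_pos this
  have hTpos : (0:ℝ) < T := by positivity
  have hspos : 0 < Real.sqrt (2 * π * T) := Real.sqrt_pos.2 (by positivity)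
  have hsqrtT : Real.sqrt ((T : ℝ) / (2 * π)) = (T:ℝ) / Real.sqrt (2 * π * T) := by
    rw [eq_div_iff (ne_of_gt hspos), ← Real.sqrt_mul (by positivity)]
    rw [show (T : ℝ) / (2 * π) * (2 * π * T) = (T:ℝ)^2 by field_simp]
    exact Real.sqrt_sq hTpos.le
  rw [hsqrtT]
  -- reduce to (2T-1) ≤ 2 * sqrt(2πT) * (T*D/2^T)
  have hmain : ((2*T : ℝ) - 1)^2 ≤ 8 * π * T * ((T:ℝ) * D / 2^T)^2 := by
    rw [div_pow, ← mul_div_assoc, le_div_iff₀ (by positivity)]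
    rcases Nat.even_or_odd n with ⟨m, hm⟩ | ⟨s, hs⟩
    · -- n = m + m, T = 2m+1 odd
      have hT2 : T/2 = m := by omega
      have hDC : D = ((2*m).choose m : ℝ) := by
        rw [hD, hT2, (show n = 2*m by omega)]
      have key' := wallis_key m
      have key : 2*(16:ℝ)^m ≤ π * D^2 * (2*(m:ℝ)+1) := by
        rw [hDC]; push_cast at key' ⊢; linarith
      have hpow : ((2:ℝ)^T)^2 = 4 * 16^m := by
        rw [← pow_mul, (show T*2 = 4*m+2 by omega), pow_add, pow_mul]
        norm_num
        ring
      have hTc : (T:ℝ) = 2*(m:ℝ)+1 := by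
        rw [hTdef, (show n = 2*m by omega)]; push_cast; ring
      rw [hpow, hTc]
      have hμ : (0:ℝ) ≤ (m:ℝ) := Nat.cast_nonneg m
      have hy : (0:ℝ) < (16:ℝ)^m := by positivity
      calc (2*(2*(m:ℝ)+1) - 1)^2 * (4 * 16^m)
          ≤ (2*(2*(m:ℝ)+1))^2 * (4 * 16^m) := by nlinarith [hy, hμ]
        _ = 8*(2*(m:ℝ)+1)^2 * (2*(16:ℝ)^m) := by ring
        _ ≤ 8*(2*(m:ℝ)+1)^2 * (π * D^2 * (2*(m:ℝ)+1)) :=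
            mul_le_mul_of_nonneg_left key (by positivity)
        _ = 8 * π * (2*(m:ℝ)+1) * ((2*(m:ℝ)+1)*D)^2 := by ring
    · -- n = 2s+1, T = 2s+2 even
      have hT2 : T/2 = s+1 := by omega
      have hC2 : ((2*(s+1)).choose (s+1) : ℝ) = 2 * D := by
        rw [hD, hT2, hs]
        have h := half_choose s
        rw [(show 2*s+2 = 2*(s+1) by ring)] at h
        exact_mod_cast h.symm
      have hC2' : ((2*(s+1)).choose (s+1) : ℝ)^2 = 4 * D^2 := by rw [hC2]; ring
      have key' := wallis_key (s+1)
      rw [hC2'] at key'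
      have key : 2*(16:ℝ)^(s+1) ≤ π * (4*D^2) * (2*((s:ℝ)+1)+1) := by
        push_cast at key' ⊢; linarith
      have hpow : ((2:ℝ)^T)^2 = 16^(s+1) := by
        rw [← pow_mul, (show T*2 = 4*(s+1) by omega), pow_mul]
        norm_num
      have hTc : (T:ℝ) = 2*((s:ℝ)+1) := by
        rw [hTdef, hs]; push_cast; ring
      rw [hpow, hTc]
      have hμ : (1:ℝ) ≤ (s:ℝ)+1 := by
        have : (0:ℝ) ≤ (s:ℝ) := Nat.cast_nonneg s
        linarith
      have hy : (0:ℝ) < (16:ℝ)^(s+1) := by positivity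
      have hpoly : (4*((s:ℝ)+1)-1)^2 * (2*((s:ℝ)+1)+1) ≤ 32*((s:ℝ)+1)^3 := by
        nlinarith [hμ]
      have h3 : (0:ℝ) < 2*((s:ℝ)+1)+1 := by linarith
      have hint1 : (4*((s:ℝ)+1)-1)^2 * (2*((s:ℝ)+1)+1) * (16:ℝ)^(s+1)
          ≤ 32*((s:ℝ)+1)^3 * (16:ℝ)^(s+1) :=
        mul_le_mul_of_nonneg_right hpoly hy.le
      have hint2 : 16*((s:ℝ)+1)^3*(2*(16:ℝ)^(s+1))
          ≤ 16*((s:ℝ)+1)^3*(π * (4*D^2) * (2*((s:ℝ)+1)+1)) :=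
        mul_le_mul_of_nonneg_left key (by positivity)
      have hres : ((4*((s:ℝ)+1)-1)^2 * (16:ℝ)^(s+1)) * (2*((s:ℝ)+1)+1)
          ≤ (16*π*((s:ℝ)+1)^3*(4*D^2)) * (2*((s:ℝ)+1)+1) := by nlinarith [hint1, hint2]
      have hres2 : (4*((s:ℝ)+1)-1)^2 * (16:ℝ)^(s+1) ≤ 16*π*((s:ℝ)+1)^3*(4*D^2) :=
        le_of_mul_le_mul_right hres h3
      calc (2*(2*((s:ℝ)+1)) - 1)^2 * (16:ℝ)^(s+1)
          = (4*((s:ℝ)+1)-1)^2 * (16:ℝ)^(s+1) := by ring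
        _ ≤ 16*π*((s:ℝ)+1)^3*(4*D^2) := hres2
        _ = 8 * π * (2*((s:ℝ)+1)) * ((2*((s:ℝ)+1))*D)^2 := by ring
  have hX : (0:ℝ) < (T:ℝ) * D / 2^T := by positivity
  have h1 : (2*(T:ℝ) - 1) ≤ 2 * Real.sqrt (2 * π * T) * ((T:ℝ) * D / 2^T) := by
    have hb : (0:ℝ) ≤ 2 * Real.sqrt (2 * π * T) * ((T:ℝ) * D / 2^T) := by positivity
    nlinarith [hmain, Real.sq_sqrt (show (0:ℝ) ≤ 2 * π * T by positivity), hb,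
      sq_nonneg (2*(T:ℝ) - 1 - 2 * Real.sqrt (2 * π * T) * ((T:ℝ) * D / 2^T))]
  -- conclude
  rw [div_sub_div _ _ (ne_of_gt hspos) (by positivity : (2 * Real.sqrt (2 * π * T)) ≠ 0)]
  rw [div_le_iff₀ (by positivity)]
  have hexp : (T:ℝ) * (2 * Real.sqrt (2 * π * T)) - Real.sqrt (2 * π * T) * 1
      = Real.sqrt (2 * π * T) * (2*(T:ℝ) - 1) := by ring
  rw [hexp]
  calc Real.sqrt (2 * π * T) * (2*(T:ℝ) - 1)
      ≤ Real.sqrt (2 * π * T) * (2 * Real.sqrt (2 * π * T) * ((T:ℝ) * D / 2^T)) := by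
        exact mul_le_mul_of_nonneg_left h1 hspos.le
    _ = (Real.sqrt (2 * π * T) * Real.sqrt (2 * π * T)) * (2 * ((T:ℝ) * D / 2^T)) := by ring
    _ = (2 * π * T) * (2 * ((T:ℝ) * D / 2^T)) := by
        rw [Real.mul_self_sqrt (by positivity)]
    _ = (T:ℝ) * D / 2^T * (Real.sqrt (2 * π * T) * (2 * Real.sqrt (2 * π * T))) := by
        rw [show Real.sqrt (2*π*(T:ℝ)) * (2 * Real.sqrt (2*π*(T:ℝ)))
            = 2 * (Real.sqrt (2*π*(T:ℝ)) * Real.sqrt (2*π*(T:ℝ))) by ring,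
          Real.mul_self_sqrt (by positivity)]
        ring
end

section
/- Suppose T balls are thrown independently and uniformly at random into 2 bins, and let H = max(Z, T - Z) where Z is the number of balls in the first bin. Then E[H] ≥ T/2 + sqrt(T/(2π)) - 1/(2 sqrt(2πT)) whenever T ≥ 1. -/
open Finset Real

lemma wallis_choose_bound (m : ℕ) :
    Real.sqrt (2 / (π * (2 * m + 1))) ≤ ((2 * m).choose m : ℝ) / 4 ^ m := by
  set c : ℝ := ((2 * m).choose m : ℝ) with hc
  have hcpos : 0 < c := by
    rw [hc]
    exact_mod_cast Nat.choose_pos (by omega : m ≤ 2 * m)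
  have hfpos : (0 : ℝ) < (Nat.factorial m : ℝ) := by exact_mod_cast m.factorial_pos
  have hfac : ((Nat.factorial (2 * m)) : ℝ) = c * (Nat.factorial m : ℝ) ^ 2 := by
    have h := Nat.choose_mul_factorial_mul_factorial (by omega : m ≤ 2 * m)
    have h2 : (2 * m).choose m * Nat.factorial m * Nat.factorial m = Nat.factorial (2 * m) := by
      simpa [Nat.two_mul, Nat.add_sub_cancel] using h
    push_cast [← h2]
    ring
  have hW := Real.Wallis.W_le m
  rw [Real.Wallis.W_eq_factorial_ratio, hfac] at hW
  have hm1 : (0 : ℝ) < 2 * (m : ℝ) + 1 := by positivity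
  have key : 2 * (2 : ℝ) ^ (4 * m) ≤ π * (c ^ 2 * (2 * m + 1)) := by
    rw [div_le_div_iff₀ (by positivity) two_pos] at hW
    nlinarith [hW, pow_pos hfpos 4, sq_nonneg c, Real.pi_pos]
  rw [Real.sqrt_le_iff]
  refine ⟨by positivity, ?_⟩
  rw [div_pow, div_le_div_iff₀ (by positivity) (by positivity)]
  have h4 : ((4 : ℝ) ^ m) ^ 2 = (2 : ℝ) ^ (4 * m) := by
    rw [show (4 : ℝ) = 2 ^ 2 by norm_num, ← pow_mul, ← pow_mul]
    congr 1
    ring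
  nlinarith [key, h4]

lemma sum_max_eq (T : ℕ) (hT : 1 ≤ T) :
    ∑ k ∈ Finset.range (T + 1), (T.choose k : ℝ) * max (k : ℝ) ((T : ℝ) - k)
      = T * 2 ^ (T - 1) + T * ((T - 1).choose (T / 2) : ℝ) := by
  have hmax : ∀ x y : ℝ, max x y = y + max (x - y) 0 := by
    intro x y
    rcases le_total x y with h | h
    · rw [max_eq_right h, max_eq_right (by linarith), add_zero]
    · rw [max_eq_left h, max_eq_left (by linarith)]; ring
  have hsplit : ∀ k : ℕ, (T.choose k : ℝ) * max (k : ℝ) ((T : ℝ) - k)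
      = (T.choose k : ℝ) * ((T : ℝ) - k)
        + (T.choose k : ℝ) * max ((k : ℝ) - ((T : ℝ) - k)) 0 := by
    intro k; rw [hmax (k : ℝ) ((T : ℝ) - k)]; ring
  simp_rw [hsplit]
  rw [Finset.sum_add_distrib]
  have hSum1 : ∑ k ∈ Finset.range (T + 1), (T.choose k : ℝ) * ((T : ℝ) - k)
      = T * 2 ^ (T - 1) := by
    have hpt : ∀ k ∈ Finset.range (T + 1),
        (T.choose k : ℝ) * ((T : ℝ) - k) = (T : ℝ) * ((T - 1).choose k : ℝ) := by
      intro k hk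
      have hk' : k ≤ T := by
        have := Finset.mem_range.mp hk; omega
      have h := Nat.choose_mul_succ_eq (T - 1) k
      rw [Nat.sub_add_cancel hT] at h
      have h' : ((T - 1).choose k * T : ℝ) = (T.choose k : ℝ) * ((T : ℝ) - k) := by
        rw [show ((T : ℝ) - k) = ((T - k : ℕ) : ℝ) by push_cast [Nat.cast_sub hk']; ring]
        exact_mod_cast congrArg (Nat.cast : ℕ → ℝ) h
      linarith [h']
    rw [Finset.sum_congr rfl hpt, ← Finset.mul_sum]
    have : ∑ k ∈ Finset.range (T + 1), ((T - 1).choose k : ℝ) = 2 ^ (T - 1) := by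
      rw [show T + 1 = (T - 1) + 1 + 1 by omega, Finset.sum_range_succ]
      have hz : (T - 1).choose (T - 1 + 1) = 0 := Nat.choose_eq_zero_of_lt (by omega)
      rw [hz]
      exact_mod_cast Nat.sum_range_choose (T - 1)
    rw [this]
  have hSum2 : ∑ k ∈ Finset.range (T + 1),
      (T.choose k : ℝ) * max ((k : ℝ) - ((T : ℝ) - k)) 0
      = T * ((T - 1).choose (T / 2) : ℝ) := by
    set cc := T / 2 + 1 with hcc
    have hcle : cc ≤ T + 1 := by omega
    rw [Finset.range_eq_Ico, ← Finset.sum_Ico_consecutive _ (Nat.zero_le cc) hcle]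
    have hzero : ∑ k ∈ Finset.Ico 0 cc,
        (T.choose k : ℝ) * max ((k : ℝ) - ((T : ℝ) - k)) 0 = 0 := by
      apply Finset.sum_eq_zero
      intro k hk
      have hk' : k ≤ T / 2 := by
        have := (Finset.mem_Ico.mp hk).2; omega
      have h2k : 2 * k ≤ T := by omega
      have : max ((k : ℝ) - ((T : ℝ) - k)) 0 = 0 := by
        apply max_eq_right
        have : (2 * k : ℝ) ≤ (T : ℝ) := by exact_mod_cast h2k
        linarith
      rw [this, mul_zero]
    rw [hzero, zero_add]
    have hpt : ∀ k ∈ Finset.Ico cc (T + 1),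
        (T.choose k : ℝ) * max ((k : ℝ) - ((T : ℝ) - k)) 0
          = (T : ℝ) * ((T - 1).choose (k - 1) : ℝ)
            - (T : ℝ) * ((T - 1).choose k : ℝ) := by
      intro k hk
      obtain ⟨hk1, hk2⟩ := Finset.mem_Ico.mp hk
      have hk1' : 1 ≤ k := by omega
      have hkT : k ≤ T := by omega
      have h2k : T + 1 ≤ 2 * k := by omega
      have hmaxk : max ((k : ℝ) - ((T : ℝ) - k)) 0 = (k : ℝ) - ((T : ℝ) - k) := by
        apply max_eq_left
        have : (T : ℝ) + 1 ≤ (2 * k : ℝ) := by exact_mod_cast h2k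
        push_cast at this ⊢
        linarith
      rw [hmaxk]
      obtain ⟨t, rfl⟩ : ∃ t, T = t + 1 := ⟨T - 1, by omega⟩
      obtain ⟨j, rfl⟩ : ∃ j, k = j + 1 := ⟨k - 1, by omega⟩
      simp only [Nat.add_sub_cancel]
      have hi : ((j : ℝ) + 1) * ((t + 1).choose (j + 1) : ℝ)
          = ((t : ℝ) + 1) * (t.choose j : ℝ) := by
        have h := Nat.add_one_mul_choose_eq t j
        have h' := congrArg (Nat.cast : ℕ → ℝ) h
        push_cast [Nat.succ_eq_add_one] at h'
        linarith
      have hii : (((t + 1).choose (j + 1)) : ℝ)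
          = (t.choose j : ℝ) + (t.choose (j + 1) : ℝ) := by
        exact_mod_cast congrArg (Nat.cast : ℕ → ℝ) (Nat.choose_succ_succ t j)
      push_cast
      linear_combination 2 * hi - ((t : ℝ) + 1) * hii
    rw [Finset.sum_congr rfl hpt]
    rw [Finset.sum_Ico_eq_sum_range]
    have hn : T + 1 - cc = T - T / 2 := by omega
    have hGpt : ∀ i ∈ Finset.range (T + 1 - cc),
        (T : ℝ) * ((T - 1).choose (cc + i - 1) : ℝ) - (T : ℝ) * ((T - 1).choose (cc + i) : ℝ)
          = (T : ℝ) * ((T - 1).choose (T / 2 + i) : ℝ)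
            - (T : ℝ) * ((T - 1).choose (T / 2 + (i + 1)) : ℝ) := by
      intro i _
      rw [show cc + i - 1 = T / 2 + i by omega, show cc + i = T / 2 + (i + 1) by omega]
    have tele : ∑ i ∈ Finset.range (T + 1 - cc),
        ((T : ℝ) * ((T - 1).choose (T / 2 + i) : ℝ)
          - (T : ℝ) * ((T - 1).choose (T / 2 + (i + 1)) : ℝ))
        = (T : ℝ) * ((T - 1).choose (T / 2 + 0) : ℝ)
          - (T : ℝ) * ((T - 1).choose (T / 2 + (T + 1 - cc)) : ℝ) :=
      Finset.sum_range_sub' (fun j => (T : ℝ) * ((T - 1).choose (T / 2 + j) : ℝ)) (T + 1 - cc)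
    rw [Finset.sum_congr rfl hGpt, tele,
      show T / 2 + (T + 1 - cc) = T by omega,
      Nat.choose_eq_zero_of_lt (show T - 1 < T by omega), Nat.add_zero]
    push_cast
    ring
  rw [hSum1, hSum2]

/-- `T` balls thrown uniformly at random into 2 bins; `Z ~ Binomial(T, 1/2)` is the
load of the first bin and `H = max(Z, T - Z)` the load of the more populated bin.
Then `E[H] ≥ T/2 + √(T/(2π)) - 1/(2√(2πT))` for `T ≥ 1`. -/
theorem stmt_13 (T : ℕ) (hT : 1 ≤ T) :
    ∑ k ∈ Finset.range (T + 1),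
        ((T.choose k : ℝ) / 2 ^ T) * max (k : ℝ) ((T : ℝ) - k)
      ≥ (T : ℝ) / 2 + Real.sqrt ((T : ℝ) / (2 * π))
          - 1 / (2 * Real.sqrt (2 * π * T)) := by
  have hmain : ∑ k ∈ Finset.range (T + 1),
      ((T.choose k : ℝ) / 2 ^ T) * max (k : ℝ) ((T : ℝ) - k)
      = (T : ℝ) / 2 + (T : ℝ) * ((T - 1).choose (T / 2) : ℝ) / 2 ^ T := by
    have : ∀ k : ℕ, ((T.choose k : ℝ) / 2 ^ T) * max (k : ℝ) ((T : ℝ) - k)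
        = ((T.choose k : ℝ) * max (k : ℝ) ((T : ℝ) - k)) / 2 ^ T := by
      intro k; ring
    simp_rw [this]
    rw [← Finset.sum_div, sum_max_eq T hT]
    have h2T : (2 : ℝ) ^ T = 2 ^ (T - 1) * 2 := by
      rw [← pow_succ, show T - 1 + 1 = T by omega]
    rw [h2T]
    have : (0:ℝ) < 2 ^ (T-1) := by positivity
    field_simp
  rw [hmain, ge_iff_le]
  have hT1 : (1 : ℝ) ≤ (T : ℝ) := by exact_mod_cast hT
  have hsqpos : 0 < Real.sqrt (2 * π * T) :=
    Real.sqrt_pos.mpr (by positivity)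
  have key : Real.sqrt ((T : ℝ) / (2 * π)) - 1 / (2 * Real.sqrt (2 * π * T))
      ≤ (T : ℝ) * ((T - 1).choose (T / 2) : ℝ) / 2 ^ T := by
    rcases Nat.even_or_odd T with ⟨m, hm⟩ | ⟨m, hm⟩
    · -- even case : T = 2 m with m ≥ 1
      have hm1 : 1 ≤ m := by omega
      have hm1' : (1 : ℝ) ≤ (m : ℝ) := by exact_mod_cast hm1
      have hD : (T - 1).choose (T / 2) = (2 * m - 1).choose m := by
        congr 1 <;> omega
      have h2C : 2 * (2 * m - 1).choose m = (2 * m).choose m := by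
        obtain ⟨j, rfl⟩ : ∃ j, m = j + 1 := ⟨m - 1, by omega⟩
        have hsymm : (2 * j + 1).choose j = (2 * j + 1).choose (j + 1) := by
          have := Nat.choose_symm (show j + 1 ≤ 2 * j + 1 by omega)
          rw [show 2 * j + 1 - (j + 1) = j by omega] at this
          exact this
        have hps := Nat.choose_succ_succ (2 * j + 1) j
        simp only [Nat.succ_eq_add_one] at hps
        rw [show 2 * (j + 1) - 1 = 2 * j + 1 by omega, show 2 * (j + 1) = 2 * j + 1 + 1 by omega]
        omega
      have hTm : (T : ℝ) = 2 * m := by rw [hm]; push_cast; ring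
      have h2T : (2 : ℝ) ^ T = 4 ^ m := by
        rw [hm, show (4 : ℝ) = 2 * 2 by norm_num, mul_pow, pow_add]
      set s : ℝ := Real.sqrt (π * m) with hsdef
      have hs : 0 < s := Real.sqrt_pos.mpr (by positivity)
      have hs2 : s ^ 2 = π * m := Real.sq_sqrt (by positivity)
      have ha : Real.sqrt ((T : ℝ) / (2 * π)) = (m : ℝ) / s := by
        rw [hTm, show 2 * (m : ℝ) / (2 * π) = ((m : ℝ) / s) ^ 2 by
          rw [div_pow, hs2]; rw [div_eq_div_iff (by positivity) (by positivity)]; ring,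
          Real.sqrt_sq (by positivity)]
      have hb : Real.sqrt (2 * π * (T : ℝ)) = 2 * s := by
        rw [hTm, show 2 * π * (2 * (m : ℝ)) = 2 ^ 2 * (π * m) by ring,
          Real.sqrt_mul (by norm_num : (0:ℝ) ≤ 2 ^ 2), Real.sqrt_sq (by norm_num : (0:ℝ) ≤ 2)]
      set Q : ℝ := Real.sqrt (2 / (π * (2 * m + 1))) with hQdef
      have hQ := wallis_choose_bound m
      have hsQ : s * Q = Real.sqrt (2 * m / (2 * m + 1)) := by
        rw [hsdef, hQdef, ← Real.sqrt_mul (by positivity)]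
        congr 1
        have hπ : π ≠ 0 := Real.pi_ne_zero
        have hm0 : (2 * (m : ℝ) + 1) ≠ 0 := by positivity
        field_simp
      have key2 : (m : ℝ) - 1 / 4 ≤ (m : ℝ) * (s * Q) := by
        rw [hsQ, show (m : ℝ) * Real.sqrt (2 * m / (2 * m + 1))
            = Real.sqrt ((m : ℝ) ^ 2 * (2 * m / (2 * m + 1))) by
          rw [Real.sqrt_mul (by positivity), Real.sqrt_sq (by positivity)]]
        rw [Real.le_sqrt (by linarith) (by positivity)]
        rw [show (m : ℝ) ^ 2 * (2 * m / (2 * m + 1)) = 2 * (m:ℝ) ^ 3 / (2 * m + 1) by ring,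
          le_div_iff₀ (by positivity)]
        nlinarith [hm1']
      have hR : (T : ℝ) * ((T - 1).choose (T / 2) : ℝ) / 2 ^ T
          = (m : ℝ) * (((2 * m).choose m : ℝ) / 4 ^ m) := by
        rw [hD, hTm, h2T]
        have hC : ((2 * m).choose m : ℝ) = 2 * ((2 * m - 1).choose m : ℝ) := by
          exact_mod_cast (congrArg (Nat.cast : ℕ → ℝ) h2C).symm
        rw [hC]
        field_simp
      rw [ha, hb, hR]
      have step1 : (m : ℝ) / s - 1 / (2 * (2 * s)) ≤ (m : ℝ) * Q := by
        rw [show (m : ℝ) / s - 1 / (2 * (2 * s)) = ((m : ℝ) - 1 / 4) / s by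
          field_simp; ring, div_le_iff₀ hs]
        calc (m : ℝ) - 1 / 4 ≤ (m : ℝ) * (s * Q) := key2
          _ = (m : ℝ) * Q * s := by ring
      calc (m : ℝ) / s - 1 / (2 * (2 * s)) ≤ (m : ℝ) * Q := step1
        _ ≤ (m : ℝ) * (((2 * m).choose m : ℝ) / 4 ^ m) :=
          mul_le_mul_of_nonneg_left hQ (by positivity)
    · -- odd case : T = 2 m + 1
      have hD : (T - 1).choose (T / 2) = (2 * m).choose m := by
        congr 1 <;> omega
      have hTm : (T : ℝ) = 2 * m + 1 := by rw [hm]; push_cast; ring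
      have h2T : (2 : ℝ) ^ T = 4 ^ m * 2 := by
        rw [hm, pow_succ]
        congr 1
        rw [show (4 : ℝ) = 2 * 2 by norm_num, mul_pow, ← pow_add, ← two_mul]
      set Q : ℝ := Real.sqrt (2 / (π * (2 * m + 1))) with hQdef
      have hQ := wallis_choose_bound m
      have ha : Real.sqrt ((T : ℝ) / (2 * π)) = ((2 * (m : ℝ) + 1) / 2) * Q := by
        rw [hTm, hQdef, show (2 * (m : ℝ) + 1) / (2 * π)
            = ((2 * (m : ℝ) + 1) / 2) ^ 2 * (2 / (π * (2 * m + 1))) by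
          rw [div_pow]; field_simp,
          Real.sqrt_mul (sq_nonneg _), Real.sqrt_sq (by positivity)]
      have hR : (T : ℝ) * ((T - 1).choose (T / 2) : ℝ) / 2 ^ T
          = ((2 * (m : ℝ) + 1) / 2) * (((2 * m).choose m : ℝ) / 4 ^ m) := by
        rw [hD, hTm, h2T]
        ring
      rw [ha, hR]
      have h1 : 0 < 1 / (2 * Real.sqrt (2 * π * T)) := by positivity
      have h2 : ((2 * (m : ℝ) + 1) / 2) * Q
          ≤ ((2 * (m : ℝ) + 1) / 2) * (((2 * m).choose m : ℝ) / 4 ^ m) :=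
        mul_le_mul_of_nonneg_left hQ (by positivity)
      linarith
  linarith [key]
end

section
/- Consider the single-cache online caching problem with library size N = 2 and cache capacity C = 1, where at each slot t the policy chooses γ_t ∈ [0,1] (fraction of file 1 cached) before the request w_t ∈ {0,1} arrives, the per-slot reward is γ_t w_t + (1-γ_t)(1-w_t), and the regret is R_T = sup over request sequences of [max(Σ w_t, T - Σ w_t) - Σ_t (γ_t w_t + (1-γ_t)(1-w_t))]. Then every online policy satisfies R_T ≥ sqrt(T/(2π)) - 1/(2 sqrt(2πT)) for all T ≥ 1. -/
open Finset Real

lemma wallis_bound (m : ℕ) :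
    (2:ℝ) * 16^m ≤ π * (2*m+1) * ((2*m).choose m)^2 := by
  have h := Real.Wallis.W_le m
  rw [Real.Wallis.W_eq_factorial_ratio] at h
  have hsub : 2*m - m = m := by omega
  have hfac : ((2*m).factorial : ℝ) = ((2*m).choose m) * (m.factorial * m.factorial) := by
    rw [← Nat.choose_mul_factorial_mul_factorial (Nat.le_mul_of_pos_left m (by norm_num)), hsub]
    push_cast; ring
  have hm : (0:ℝ) < (m.factorial:ℝ)^4 := by positivity
  rw [div_le_div_iff₀ (by positivity) (by norm_num)] at h
  rw [hfac] at h
  have key : (2:ℝ) * 16^m * (m.factorial:ℝ)^4 ≤ π * (2*m+1) * ((2*m).choose m)^2 * (m.factorial:ℝ)^4 := by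
    calc (2:ℝ) * 16^m * (m.factorial:ℝ)^4 = 2^(4*m) * (m.factorial:ℝ)^4 * 2 := by
          rw [pow_mul]; ring_nf
      _ ≤ π * ((((2*m).choose m) * ((m.factorial:ℝ) * m.factorial))^2 * (2*m+1)) := h
      _ = π * (2*m+1) * ((2*m).choose m)^2 * (m.factorial:ℝ)^4 := by ring
  exact le_of_mul_le_mul_right key hm

lemma wallis_sqrt (m : ℕ) :
    Real.sqrt 2 * 4^m ≤ Real.sqrt (π*(2*m+1)) * ((2*m).choose m) := by
  have h := wallis_bound m
  have h1 : Real.sqrt ((2:ℝ)*16^m) ≤ Real.sqrt (π*(2*m+1)*((2*m).choose m)^2) :=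
    Real.sqrt_le_sqrt h
  have e1 : Real.sqrt ((2:ℝ)*16^m) = Real.sqrt 2 * 4^m := by
    rw [Real.sqrt_mul (by norm_num)]
    congr 1
    rw [show (16:ℝ)^m = ((4:ℝ)^m)^2 by rw [← pow_mul, mul_comm m 2, pow_mul]; norm_num]
    exact Real.sqrt_sq (by positivity)
  have e2 : Real.sqrt (π*(2*m+1)*((2*m).choose m)^2)
      = Real.sqrt (π*(2*m+1)) * ((2*m).choose m) := by
    rw [Real.sqrt_mul (by positivity)]
    congr 1
    exact Real.sqrt_sq (by positivity)
  rw [e1, e2] at h1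
  exact h1

lemma telescope (T j : ℕ) (hj : j < T) :
    ∑ k ∈ range (j+1), ((T:ℝ) - 2*k) * (T.choose k) = T * ((T-1).choose j) := by
  induction j with
  | zero => simp
  | succ j ih =>
    rw [Finset.sum_range_succ, ih (by omega)]
    have hT : T - 1 + 1 = T := by omega
    have h1 : ((j:ℝ)+1) * (T.choose (j+1)) = T * ((T-1).choose j) := by
      have e0 := Nat.add_one_mul_choose_eq (T-1) j
      simp only [Nat.succ_eq_add_one, hT] at e0
      have : (T:ℝ) * ((T-1).choose j) = T.choose (j+1) * (j+1) := by exact_mod_cast congrArg (Nat.cast (R:=ℝ)) e0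
      rw [this]; ring
    have h2 : ((T:ℝ) - (j+1)) * (T.choose (j+1)) = T * ((T-1).choose (j+1)) := by
      have e1 := Nat.add_one_mul_choose_eq (T-1) (j+1)
      simp only [Nat.succ_eq_add_one, hT] at e1
      have e2 := Nat.choose_succ_right_eq T (j+1)
      have hle : j + 1 ≤ T := by omega
      have : (T:ℝ) * ((T-1).choose (j+1)) = (T.choose (j+1)) * ((T:ℝ) - (j+1)) := by
        rw [show ((T:ℝ) * ((T-1).choose (j+1)) : ℝ) = ((T * ((T-1).choose (j+1)) : ℕ) : ℝ) by push_cast; ring,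
          e1, e2]
        push_cast [Nat.cast_sub hle]
        ring
      rw [this]; ring
    push_cast
    nlinarith [h1, h2]

lemma mad_sum (T : ℕ) (hT : 1 ≤ T) :
    ∑ k ∈ range (T+1), (T.choose k : ℝ) * |(T:ℝ) - 2*k| = 2 * T * ((T-1).choose ((T-1)/2)) := by
  set j := (T-1)/2 with hj
  have hjT : j < T := by omega
  have hsplit : ∑ k ∈ range (j+1), (T.choose k : ℝ) * |(T:ℝ) - 2*k|
      + ∑ k ∈ Ico (j+1) (T+1), (T.choose k : ℝ) * |(T:ℝ) - 2*k|
      = ∑ k ∈ range (T+1), (T.choose k : ℝ) * |(T:ℝ) - 2*k| :=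
    Finset.sum_range_add_sum_Ico _ (by omega)
  have hlow : ∑ k ∈ range (j+1), (T.choose k : ℝ) * |(T:ℝ) - 2*k| = T * ((T-1).choose j) := by
    rw [← telescope T j hjT]
    apply Finset.sum_congr rfl
    intro k hk
    rw [Finset.mem_range] at hk
    rw [abs_of_nonneg]
    · ring
    · have h2k : 2*k+1 ≤ T := by omega
      have hc : ((2*k+1:ℕ):ℝ) ≤ (T:ℝ) := by exact_mod_cast h2k
      push_cast at hc
      linarith
  have hhigh : ∑ k ∈ Ico (j+1) (T+1), (T.choose k : ℝ) * |(T:ℝ) - 2*k|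
      = ∑ k ∈ range (T-j), ((T:ℝ) - 2*k) * (T.choose k) := by
    apply Finset.sum_nbij' (fun k => T - k) (fun k => T - k)
    · intro a ha; rw [Finset.mem_Ico] at ha; rw [Finset.mem_range]; omega
    · intro a ha; rw [Finset.mem_range] at ha; rw [Finset.mem_Ico]; omega
    · intro a ha; rw [Finset.mem_Ico] at ha; omega
    · intro a ha; rw [Finset.mem_range] at ha; omega
    · intro a ha; rw [Finset.mem_Ico] at ha
      have haT : a ≤ T := by omega
      have h2a : T ≤ 2*a := by omega
      rw [Nat.choose_symm haT, abs_of_nonpos, Nat.cast_sub haT]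
      · push_cast; ring
      · have : (T:ℝ) ≤ 2*a := by exact_mod_cast h2a
        linarith
  have hTj : T - j = T/2 + 1 := by omega
  have hT2 : T/2 < T := by omega
  rw [← hsplit, hlow, hhigh, hTj, telescope T (T/2) hT2]
  have : (T-1).choose (T/2) = (T-1).choose j := by
    rw [← Nat.choose_symm (show T/2 ≤ T-1 by omega)]
    congr 1
    omega
  rw [this]
  ring

lemma fiber (T : ℕ) (f : ℕ → ℝ) :
    ∑ w : Fin T → Bool, f ((univ.filter (fun t => w t = true)).card)
      = ∑ k ∈ range (T+1), (T.choose k : ℝ) * f k := by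
  let e : (Fin T → Bool) ≃ Finset (Fin T) :=
    { toFun := fun w => univ.filter (fun t => w t = true)
      invFun := fun s t => decide (t ∈ s)
      left_inv := by intro w; funext t; simp
      right_inv := by intro s; ext t; simp }
  have h1 : ∑ w : Fin T → Bool, f ((univ.filter (fun t => w t = true)).card)
      = ∑ s : Finset (Fin T), f s.card := by
    apply Fintype.sum_equiv e
    intro w
    rfl
  rw [h1]
  have h2 : ∑ s : Finset (Fin T), f s.card
      = ∑ k ∈ range (T+1), ∑ s ∈ (univ : Finset (Finset (Fin T))).filter (fun s => s.card = k), f s.card := by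
    rw [Finset.sum_fiberwise_of_maps_to]
    intro s _
    rw [Finset.mem_range]
    have := Finset.card_le_univ s
    simp only [Finset.card_univ, Fintype.card_fin] at this
    omega
  rw [h2]
  apply Finset.sum_congr rfl
  intro k _
  have h3 : (univ : Finset (Finset (Fin T))).filter (fun s => s.card = k)
      = Finset.powersetCard k univ := by
    rw [Finset.powersetCard_eq_filter, ← Finset.powerset_univ]
  rw [h3]
  have h4 : ∀ s ∈ Finset.powersetCard k (univ : Finset (Fin T)), f s.card = f k := by
    intro s hs
    rw [Finset.mem_powersetCard] at hs
    rw [hs.2]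
  rw [Finset.sum_congr rfl h4, Finset.sum_const, Finset.card_powersetCard,
    Finset.card_univ, Fintype.card_fin, nsmul_eq_mul]

lemma numeric (T : ℕ) (hT : 1 ≤ T) :
    Real.sqrt ((T:ℝ)/(2*π)) - 1/(2*Real.sqrt (2*π*T)) ≤ (T:ℝ) * ((T-1).choose ((T-1)/2)) / 2^T := by
  have hπ := Real.pi_pos
  have hTpos : (0:ℝ) < T := by exact_mod_cast hT
  have hspos : 0 < Real.sqrt (2*π*T) := Real.sqrt_pos.mpr (by positivity)
  set s := Real.sqrt (2*π*T) with hs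
  have hs2 : s^2 = 2*π*T := Real.sq_sqrt (by positivity)
  have hL : Real.sqrt ((T:ℝ)/(2*π)) = (T:ℝ)/s := by
    rw [show (T:ℝ)/(2*π) = ((T:ℝ)/s)^2 by
      rw [div_pow, hs2]; field_simp]
    exact Real.sqrt_sq (by positivity)
  rw [hL]
  rw [show (T:ℝ)/s - 1/(2*s) = (2*T-1)/(2*s) by field_simp]
  rw [div_le_div_iff₀ (by positivity) (by positivity)]
  rcases Nat.even_or_odd T with ⟨m, hm⟩ | ⟨m, hm⟩
  · -- even case, T = 2m, m ≥ 1
    have hm' : T = 2*m := by omega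
    have hm1 : 1 ≤ m := by omega
    have hm1' : (1:ℝ) ≤ m := by exact_mod_cast hm1
    subst hm'
    have hj : (2*m-1)/2 = m-1 := by omega
    rw [hj]
    have hC : ((2*m).choose m : ℝ) = 2 * ((2*m-1).choose (m-1)) := by
      obtain ⟨n, rfl⟩ : ∃ n, m = n+1 := ⟨m-1, by omega⟩
      have e1 : (2*(n+1)).choose (n+1) = (2*n+1).choose n + (2*n+1).choose (n+1) := by
        rw [show 2*(n+1) = (2*n+1)+1 by ring]
        exact Nat.choose_succ_succ _ _
      have e2 : (2*n+1).choose (n+1) = (2*n+1).choose n := by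
        rw [← Nat.choose_symm (show n+1 ≤ 2*n+1 by omega)]
        congr 1
        omega
      have e3 : 2*(n+1)-1 = 2*n+1 := by omega
      have e4 : n+1-1 = n := rfl
      rw [e3, e4, e1, e2]
      push_cast
      ring
    have hcpos : (0:ℝ) ≤ ((2*m-1).choose (m-1) : ℝ) := by positivity
    have W := wallis_sqrt m
    have hCpos : (0:ℝ) ≤ (((2*m).choose m : ℕ) : ℝ) := by positivity
    set Q : ℝ := Real.sqrt (π*(2*m+1)) with hQ
    have hQpos : (0:ℝ) ≤ Q := Real.sqrt_nonneg _
    set R : ℝ := Real.sqrt (π*m) with hR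
    have hRpos : (0:ℝ) ≤ R := Real.sqrt_nonneg _
    have hsR : s = 2 * R := by
      rw [hs, hR, show 2*π*((2*m:ℕ):ℝ) = 4*(π*m) by push_cast; ring,
        Real.sqrt_mul (by norm_num), show Real.sqrt 4 = 2 by
          rw [show (4:ℝ) = 2^2 by norm_num]; exact Real.sqrt_sq (by norm_num)]
    have hK2 : ((4*(m:ℝ)-1))^2 * (π*(2*m+1)) ≤ ((4*(m:ℝ))*Real.sqrt 2)^2 * (π*m) := by
      rw [mul_pow, Real.sq_sqrt (by norm_num)]
      nlinarith [hπ, hm1', sq_nonneg ((m:ℝ)-1)]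
    have hK : (4*(m:ℝ)-1) * Q ≤ (4*m*Real.sqrt 2) * R := by
      have l1 : (4*(m:ℝ)-1) * Q = Real.sqrt (((4*(m:ℝ)-1))^2 * (π*(2*m+1))) := by
        rw [Real.sqrt_mul (by positivity), Real.sqrt_sq (by linarith)]
      have l2 : (4*(m:ℝ)*Real.sqrt 2) * R = Real.sqrt (((4*(m:ℝ))*Real.sqrt 2)^2 * (π*m)) := by
        rw [Real.sqrt_mul (by positivity), Real.sqrt_sq (by positivity)]
      rw [l1, l2]
      exact Real.sqrt_le_sqrt hK2
    have sqrt2_pos : (0:ℝ) < Real.sqrt 2 := Real.sqrt_pos.mpr (by norm_num)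
    have chain : Real.sqrt 2 * ((4*(m:ℝ)-1) * 4^m)
        ≤ Real.sqrt 2 * (4*m*R*((2*m).choose m)) := by
      calc Real.sqrt 2 * ((4*(m:ℝ)-1) * 4^m) = (4*(m:ℝ)-1) * (Real.sqrt 2 * 4^m) := by ring
        _ ≤ (4*(m:ℝ)-1) * (Q * ((2*m).choose m)) :=
            mul_le_mul_of_nonneg_left W (by linarith)
        _ = ((4*(m:ℝ)-1) * Q) * ((2*m).choose m) := by ring
        _ ≤ ((4*m*Real.sqrt 2) * R) * ((2*m).choose m) := mul_le_mul_of_nonneg_right hK hCpos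
        _ = Real.sqrt 2 * (4*m*R*((2*m).choose m)) := by ring
    have main : (4*(m:ℝ)-1) * 4^m ≤ 4*m*R*((2*m).choose m) :=
      le_of_mul_le_mul_left chain sqrt2_pos
    have hpow : (2:ℝ)^(2*m) = 4^m := by rw [pow_mul]; norm_num
    rw [hsR]
    push_cast
    calc (2*(2*(m:ℝ))-1) * 2^(2*m) = (4*(m:ℝ)-1) * 4^m := by rw [hpow]; ring
      _ ≤ 4*m*R*((2*m).choose m) := main
      _ = 2*(m:ℝ)*((2*m-1).choose (m-1) : ℝ)*(2*(2*R)) := by rw [hC]; ring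
  · -- odd case, T = 2m+1
    subst hm
    have hj : (2*m+1-1)/2 = m := by omega
    rw [hj]
    have W := wallis_sqrt m
    have hCpos : (0:ℝ) ≤ (((2*m).choose m : ℕ) : ℝ) := by positivity
    set Q : ℝ := Real.sqrt (π*(2*m+1)) with hQ
    have hQpos : (0:ℝ) ≤ Q := Real.sqrt_nonneg _
    have hsQ : s = Real.sqrt 2 * Q := by
      rw [hs, hQ, show 2*π*((2*m+1:ℕ):ℝ) = 2*(π*(2*m+1)) by push_cast; ring,
        Real.sqrt_mul (by norm_num)]
    have h22 : Real.sqrt 2 * Real.sqrt 2 = 2 := Real.mul_self_sqrt (by norm_num)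
    have hpow : (2:ℝ)^(2*m+1) = 2*4^m := by
      rw [pow_succ, pow_mul]; norm_num; ring
    have chain2 : (2:ℝ) * 4^m ≤ Real.sqrt 2 * (Q * ((2*m).choose m)) := by
      have h := mul_le_mul_of_nonneg_left W (Real.sqrt_nonneg 2)
      rw [← mul_assoc, h22] at h
      exact h
    rw [hsQ]
    push_cast
    calc (2*(2*(m:ℝ)+1)-1) * 2^(2*m+1) ≤ (2*(2*(m:ℝ)+1)) * 2^(2*m+1) :=
          mul_le_mul_of_nonneg_right (by linarith) (by positivity)
      _ = 2*((2*(m:ℝ)+1)*(2*4^m)) := by rw [hpow]; ring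
      _ ≤ 2*((2*(m:ℝ)+1)*(Real.sqrt 2 * (Q * ((2*m).choose m)))) := by
          apply mul_le_mul_of_nonneg_left _ (by norm_num)
          exact mul_le_mul_of_nonneg_left chain2 (by positivity)
      _ = (2*(m:ℝ)+1)*((2*m).choose m)*(2*(Real.sqrt 2 * Q)) := by ring

lemma policy_sum (T : ℕ) (γ : (Fin T → Bool) → Fin T → ℝ)
    (hadapt : ∀ w w' : Fin T → Bool, ∀ t, (∀ s, s < t → w s = w' s) → γ w t = γ w' t) :
    ∑ w : Fin T → Bool, ∑ t, (γ w t * (if w t then (1:ℝ) else 0)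
        + (1 - γ w t) * (if w t then (0:ℝ) else 1)) = (T:ℝ) * 2^T / 2 := by
  rw [Finset.sum_comm]
  have key : ∀ t : Fin T, ∑ w : Fin T → Bool, (γ w t * (if w t then (1:ℝ) else 0)
      + (1 - γ w t) * (if w t then (0:ℝ) else 1)) = 2^T / 2 := by
    intro t
    set f : (Fin T → Bool) → ℝ := fun w => γ w t * (if w t then (1:ℝ) else 0)
      + (1 - γ w t) * (if w t then (0:ℝ) else 1) with hf
    set i : (Fin T → Bool) → (Fin T → Bool) := fun w => Function.update w t (!(w t)) with hi
    have hinv : Function.Involutive i := by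
      intro w
      funext s
      by_cases h : s = t
      · subst h
        simp [hi, Function.update_self]
      · simp [hi, Function.update_of_ne h]
    have hsum : ∑ w : Fin T → Bool, f w = ∑ w : Fin T → Bool, f (i w) :=
      (Fintype.sum_bijective i hinv.bijective _ _ (fun w => rfl)).symm
    have hpair : ∀ w, f w + f (i w) = 1 := by
      intro w
      have hγ : γ (i w) t = γ w t := by
        apply hadapt
        intro s hs
        exact Function.update_of_ne (by rintro rfl; exact lt_irrefl _ hs) _ _
      have hit : (i w) t = !(w t) := Function.update_self _ _ _
      rw [hf]
      simp only [hγ, hit]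
      cases hwt : w t <;> simp [hwt] <;> ring
    have h2 : 2 * ∑ w : Fin T → Bool, f w = 2^T := by
      calc 2 * ∑ w : Fin T → Bool, f w
          = ∑ w : Fin T → Bool, f w + ∑ w : Fin T → Bool, f (i w) := by rw [← hsum]; ring
        _ = ∑ w : Fin T → Bool, (f w + f (i w)) := by rw [← Finset.sum_add_distrib]
        _ = ∑ _w : Fin T → Bool, (1:ℝ) := Finset.sum_congr rfl (fun w _ => hpair w)
        _ = 2^T := by
            rw [Finset.sum_const, Finset.card_univ]
            simp [Fintype.card_fun]
    linarith
  rw [Finset.sum_congr rfl (fun t _ => key t), Finset.sum_const, Finset.card_univ,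
    Fintype.card_fin, nsmul_eq_mul]
  ring

/-- Single cache, library size `N = 2`, capacity `C = 1`.  An online policy chooses
`γ w t ∈ [0,1]` (the fraction of file 1 cached at slot `t`), depending only on the
past requests `w s, s < t`; the request at slot `t` is `w t ∈ {0,1}` and the reward
is `γ_t w_t + (1-γ_t)(1-w_t)`.  There is a request sequence on which the regret
against the best fixed configuration is at least `√(T/(2π)) - 1/(2√(2πT))`;
hence the worst-case regret of every online policy is at least this much. -/
theorem stmt_15 (T : ℕ) (hT : 1 ≤ T)
    (γ : (Fin T → Bool) → Fin T → ℝ)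
    (hγ : ∀ w t, γ w t ∈ Set.Icc (0 : ℝ) 1)
    (hadapt : ∀ w w' : Fin T → Bool, ∀ t, (∀ s, s < t → w s = w' s) → γ w t = γ w' t) :
    ∃ w : Fin T → Bool,
      max (∑ t, (if w t then (1 : ℝ) else 0))
          ((T : ℝ) - ∑ t, (if w t then (1 : ℝ) else 0))
        - ∑ t, (γ w t * (if w t then (1 : ℝ) else 0)
                + (1 - γ w t) * (if w t then (0 : ℝ) else 1))
      ≥ Real.sqrt ((T : ℝ) / (2 * π)) - 1 / (2 * Real.sqrt (2 * π * T)) := by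
  have hπ := Real.pi_pos
  set B : ℝ := Real.sqrt ((T : ℝ) / (2 * π)) - 1 / (2 * Real.sqrt (2 * π * T)) with hB
  set G : (Fin T → Bool) → ℝ := fun w =>
    max (∑ t, (if w t then (1 : ℝ) else 0)) ((T : ℝ) - ∑ t, (if w t then (1 : ℝ) else 0))
      - ∑ t, (γ w t * (if w t then (1 : ℝ) else 0)
              + (1 - γ w t) * (if w t then (0 : ℝ) else 1)) with hG
  have hcard : ∀ w : Fin T → Bool, (∑ t, if w t then (1:ℝ) else 0)
      = ((univ.filter (fun t => w t = true)).card : ℝ) := by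
    intro w
    rw [Finset.sum_boole]
  have hmax : ∀ w : Fin T → Bool,
      max (∑ t, (if w t then (1 : ℝ) else 0)) ((T : ℝ) - ∑ t, (if w t then (1 : ℝ) else 0))
      = ((T:ℝ) + |(T:ℝ) - 2 * ((univ.filter (fun t => w t = true)).card : ℝ)|) / 2 := by
    intro w
    rw [hcard w]
    set a : ℝ := ((univ.filter (fun t => w t = true)).card : ℝ)
    rcases le_total a ((T:ℝ) - a) with h | h
    · rw [max_eq_right h, abs_of_nonneg (by linarith)]
      ring
    · rw [max_eq_left h, abs_of_nonpos (by linarith)]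
      ring
  have hsumG : ∑ w : Fin T → Bool, G w = (T:ℝ) * ((T-1).choose ((T-1)/2)) := by
    rw [hG]
    simp only
    rw [Finset.sum_sub_distrib, policy_sum T γ hadapt]
    have : ∑ w : Fin T → Bool,
        max (∑ t, (if w t then (1 : ℝ) else 0)) ((T : ℝ) - ∑ t, (if w t then (1 : ℝ) else 0))
        = ∑ w : Fin T → Bool,
          ((T:ℝ) + |(T:ℝ) - 2 * ((univ.filter (fun t => w t = true)).card : ℝ)|) / 2 :=
      Finset.sum_congr rfl (fun w _ => hmax w)
    rw [this]
    have hsplit : ∑ w : Fin T → Bool,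
        ((T:ℝ) + |(T:ℝ) - 2 * ((univ.filter (fun t => w t = true)).card : ℝ)|) / 2
        = (∑ w : Fin T → Bool, (T:ℝ)) / 2
          + (∑ w : Fin T → Bool, |(T:ℝ) - 2 * ((univ.filter (fun t => w t = true)).card : ℝ)|) / 2 := by
      rw [← add_div, ← Finset.sum_add_distrib, ← Finset.sum_div]
    rw [hsplit]
    have h1 : ∑ _w : Fin T → Bool, (T:ℝ) = (T:ℝ) * 2^T := by
      rw [Finset.sum_const, Finset.card_univ]
      simp [Fintype.card_fun]
      ring
    have h2 : ∑ w : Fin T → Bool, |(T:ℝ) - 2 * ((univ.filter (fun t => w t = true)).card : ℝ)|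
        = 2 * T * ((T-1).choose ((T-1)/2)) := by
      rw [fiber T (fun k => |(T:ℝ) - 2 * k|), ← mad_sum T hT]
    rw [h1, h2]
    ring
  have hNE : (univ : Finset (Fin T → Bool)).Nonempty := Finset.univ_nonempty
  have hsumB : ∑ _w : Fin T → Bool, B = 2^T * B := by
    rw [Finset.sum_const, Finset.card_univ]
    simp [Fintype.card_fun]
    try ring
  have hle : ∑ _w : Fin T → Bool, B ≤ ∑ w : Fin T → Bool, G w := by
    rw [hsumB, hsumG]
    have hnum := numeric T hT
    have h2T : (0:ℝ) < 2^T := by positivity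
    calc (2:ℝ)^T * B ≤ 2^T * ((T:ℝ) * ((T-1).choose ((T-1)/2)) / 2^T) :=
          mul_le_mul_of_nonneg_left hnum (by positivity)
      _ = (T:ℝ) * ((T-1).choose ((T-1)/2)) := by field_simp
  obtain ⟨w, -, hw⟩ := Finset.exists_le_of_sum_le hNE hle
  exact ⟨w, hw⟩
end
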